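/- arXiv:2402.04689 — 9 statements merged into one kernel-verified Lean document; each statement's English description precedes it below -/
import Mathlib

section
/- Suppose the set of global minimizers has Lebesgue measure zero, i.e. λ(X*) = 0. Then, as κ → ∞, the Boltzmann density diverges on the minimizers and vanishes elsewhere: for every x ∈ X*, m^(κ)(x) → ∞, and for every x ∈ Ω \ X*, m^(κ)(x) → 0. -/
open MeasureTheory Filter Topology

/-- If the set of global minimizers `X* = {x ∈ Ω | f x = f*}` has Lebesgue
measure zero, then as `κ → ∞` the Boltzmann density `m^(κ)` diverges on `X*` and tends
to `0` on `Ω \ X*`. -/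
theorem boltzmann_density_limit_of_measure_zero
    (d : ℕ) (hd : 1 ≤ d)
    (Ω : Set (EuclideanSpace ℝ (Fin d)))
    (hΩc : IsCompact Ω)
    (hΩcl : Ω = closure (interior Ω))
    (hΩint : (interior Ω).Nonempty)
    (f : EuclideanSpace ℝ (Fin d) → ℝ)
    (hf : ContinuousOn f Ω)
    (fstar : ℝ) (hmin : IsLeast (f '' Ω) fstar)
    (m : ℝ → EuclideanSpace ℝ (Fin d) → ℝ)
    (hm : ∀ κ x, m κ x = Real.exp (-κ * f x) / ∫ t in Ω, Real.exp (-κ * f t))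
    (hX0 : volume {x | x ∈ Ω ∧ f x = fstar} = 0) :
    (∀ x ∈ {x | x ∈ Ω ∧ f x = fstar}, Tendsto (fun κ : ℝ => m κ x) atTop atTop) ∧
    (∀ x ∈ Ω \ {x | x ∈ Ω ∧ f x = fstar}, Tendsto (fun κ : ℝ => m κ x) atTop (𝓝 0)) := by
  classical
  have hΩmeas := hΩc.measurableSet
  obtain ⟨x₀, hx₀Ω, hx₀⟩ : ∃ x₀ ∈ Ω, f x₀ = fstar := by
    obtain ⟨x₀, hx₀Ω, hfx₀⟩ := hmin.1
    exact ⟨x₀, hx₀Ω, hfx₀⟩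
  have hfge : ∀ t ∈ Ω, fstar ≤ f t := fun t ht => hmin.2 ⟨t, ht, rfl⟩
  set g : ℝ → ℝ := fun κ => ∫ t in Ω, Real.exp (-κ * (f t - fstar)) with hgdef
  have hcont : ∀ κ : ℝ, ContinuousOn (fun t => Real.exp (-κ * (f t - fstar))) Ω := by
    intro κ
    exact Real.continuous_exp.comp_continuousOn
      ((continuousOn_const.mul (hf.sub continuousOn_const)))
  have hint : ∀ κ : ℝ, IntegrableOn (fun t => Real.exp (-κ * (f t - fstar))) Ω volume :=
    fun κ => (hcont κ).integrableOn_compact hΩc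
  have hZ : ∀ κ : ℝ, (∫ t in Ω, Real.exp (-κ * f t))
      = Real.exp (-κ * fstar) * g κ := by
    intro κ
    rw [hgdef, ← integral_const_mul]
    congr 1
    ext t
    rw [← Real.exp_add]
    ring_nf
  have hm' : ∀ κ x, m κ x = Real.exp (-κ * (f x - fstar)) / g κ := by
    intro κ x
    rw [hm, hZ, show -κ * f x = -κ * fstar + -κ * (f x - fstar) by ring, Real.exp_add,
      mul_div_mul_left _ _ (Real.exp_ne_zero _)]
  -- a small ball where f is close to fstar
  have hball : ∀ ε > (0:ℝ), ∃ y r, 0 < r ∧ Metric.ball y r ⊆ Ω ∧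
      ∀ t ∈ Metric.ball y r, f t - fstar < ε := by
    intro ε hε
    have hc : ContinuousWithinAt f Ω x₀ := hf x₀ hx₀Ω
    have hmem : f ⁻¹' (Set.Iio (fstar + ε)) ∈ 𝓝[Ω] x₀ := by
      apply hc
      apply Iio_mem_nhds
      rw [hx₀]; linarith
    obtain ⟨U, hUopen, hx₀U, hU⟩ := mem_nhdsWithin.1 hmem
    have hx₀cl : x₀ ∈ closure (interior Ω) := by rw [← hΩcl]; exact hx₀Ω
    obtain ⟨y, hyU, hyint⟩ := _root_.mem_closure_iff.1 hx₀cl U hUopen hx₀U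
    obtain ⟨r, hr, hrsub⟩ := Metric.isOpen_iff.1 (hUopen.inter isOpen_interior) y ⟨hyU, hyint⟩
    refine ⟨y, r, hr, ?_, ?_⟩
    · exact fun t ht => interior_subset (hrsub ht).2
    · intro t ht
      have : t ∈ U ∩ Ω := ⟨(hrsub ht).1, interior_subset (hrsub ht).2⟩
      have := hU this
      simp only [Set.mem_preimage, Set.mem_Iio] at this
      linarith
  -- lower bound on g
  have hlow : ∀ ε > (0:ℝ), ∃ c > (0:ℝ), ∀ κ ≥ (0:ℝ), c * Real.exp (-κ * ε) ≤ g κ := by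
    intro ε hε
    obtain ⟨y, r, hr, hsub, hlt⟩ := hball ε hε
    refine ⟨(volume (Metric.ball y r)).toReal, ?_, ?_⟩
    · exact ENNReal.toReal_pos (Metric.measure_ball_pos volume y hr).ne' measure_ball_lt_top.ne
    · intro κ hκ
      calc (volume (Metric.ball y r)).toReal * Real.exp (-κ * ε)
          ≤ ∫ t in Metric.ball y r, Real.exp (-κ * (f t - fstar)) := by
            rw [mul_comm]
            refine setIntegral_ge_of_const_le_real measurableSet_ball measure_ball_lt_top.ne
              (fun t ht => ?_) ((hint κ).mono_set hsub)
            apply Real.exp_le_exp.2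
            nlinarith [hlt t ht]
        _ ≤ g κ := by
            refine setIntegral_mono_set (hint κ)
              (ae_of_all _ fun t => (Real.exp_pos _).le)
              (HasSubset.Subset.eventuallyLE hsub)
  have hgpos : ∀ κ ≥ (0:ℝ), 0 < g κ := by
    intro κ hκ
    obtain ⟨c, hc, h⟩ := hlow 1 one_pos
    exact lt_of_lt_of_le (by positivity) (h κ hκ)
  -- g tends to 0
  have hg0 : Tendsto g atTop (𝓝 0) := by
    have hbound : Integrable (fun _ : EuclideanSpace ℝ (Fin d) => (1:ℝ))
        (volume.restrict Ω) := by
      refine integrableOn_const hΩc.measure_lt_top.ne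
    have h := tendsto_integral_filter_of_dominated_convergence
      (μ := volume.restrict Ω) (F := fun κ t => Real.exp (-κ * (f t - fstar)))
      (f := fun _ => (0:ℝ)) (l := atTop) (fun _ => (1:ℝ))
      (Eventually.of_forall fun κ => ((hcont κ).aestronglyMeasurable hΩmeas))
      (by
        filter_upwards [eventually_ge_atTop (0:ℝ)] with κ hκ
        filter_upwards [ae_restrict_mem hΩmeas] with t ht
        rw [Real.norm_eq_abs, abs_of_pos (Real.exp_pos _)]
        have := hfge t ht
        calc Real.exp (-κ * (f t - fstar)) ≤ Real.exp 0 := by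
              apply Real.exp_le_exp.2; nlinarith
          _ = 1 := Real.exp_zero)
      hbound
      (by
        have hnull : (volume.restrict Ω) {x | x ∈ Ω ∧ f x = fstar} = 0 :=
          le_antisymm (le_trans (Measure.restrict_le_self _) hX0.le) (zero_le)
        filter_upwards [ae_restrict_mem hΩmeas,
          (measure_eq_zero_iff_ae_notMem.1 hnull)] with t ht hns
        have hδ : 0 < f t - fstar := by
          rcases lt_or_eq_of_le (hfge t ht) with h | h
          · linarith
          · exact absurd ⟨ht, h.symm⟩ hns
        have h1 : Tendsto (fun κ : ℝ => -κ * (f t - fstar)) atTop atBot := by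
          have : Tendsto (fun κ : ℝ => κ * (f t - fstar)) atTop atTop :=
            Tendsto.atTop_mul_const hδ tendsto_id
          simpa [Function.comp_def, neg_mul] using tendsto_neg_atTop_atBot.comp this
        exact Real.tendsto_exp_atBot.comp h1)
    simpa [hgdef, neg_mul] using h
  constructor
  · intro x hx
    have hfx : f x = fstar := hx.2
    have h1 : Tendsto g atTop (𝓝[>] 0) := by
      refine tendsto_nhdsWithin_of_tendsto_nhds_of_eventually_within _ hg0 ?_
      filter_upwards [eventually_ge_atTop (0:ℝ)] with κ hκ
      exact hgpos κ hκ
    have h2 := h1.inv_tendsto_nhdsGT_zero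
    refine h2.congr' ?_
    filter_upwards with κ
    rw [hm' κ x, hfx]
    simp [one_div]
  · intro x hx
    obtain ⟨hxΩ, hxns⟩ := hx
    have hδ : 0 < f x - fstar := by
      rcases lt_or_eq_of_le (hfge x hxΩ) with h | h
      · linarith
      · exact absurd ⟨hxΩ, h.symm⟩ hxns
    set δ := f x - fstar with hδdef
    obtain ⟨c, hc, hlowc⟩ := hlow (δ/2) (by linarith)
    have hlim : Tendsto (fun κ : ℝ => (1/c) * Real.exp (-κ * (δ/2))) atTop (𝓝 0) := by
      have h1 : Tendsto (fun κ : ℝ => -κ * (δ/2)) atTop atBot := by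
        have : Tendsto (fun κ : ℝ => κ * (δ/2)) atTop atTop :=
          Tendsto.atTop_mul_const (by linarith) tendsto_id
        simpa [Function.comp_def, neg_mul] using tendsto_neg_atTop_atBot.comp this
      have := (Real.tendsto_exp_atBot.comp h1).const_mul (1/c)
      simpa using this
    refine squeeze_zero' ?_ ?_ hlim
    · filter_upwards with κ
      rw [hm' κ x]
      positivity
    · filter_upwards [eventually_ge_atTop (0:ℝ)] with κ hκ
      rw [hm' κ x, ← hδdef]
      have hlb := hlowc κ hκ
      have hpos : 0 < c * Real.exp (-κ * (δ/2)) := by positivity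
      calc Real.exp (-κ * δ) / g κ
          ≤ Real.exp (-κ * δ) / (c * Real.exp (-κ * (δ/2))) := by
            apply div_le_div_of_nonneg_left (Real.exp_pos _).le hpos hlb
        _ = (1/c) * Real.exp (-κ * (δ/2)) := by
            rw [show -κ * δ = -κ * (δ/2) + -κ * (δ/2) by ring, Real.exp_add]
            field_simp
end

section
/- Suppose the set of global minimizers has positive Lebesgue measure, i.e. λ(X*) > 0. Then, as κ → ∞, the Boltzmann density converges pointwise to the uniform density on the minimizers: for every x ∈ X*, m^(κ)(x) → λ(X*)^{-1}, and for every x ∈ Ω \ X*, m^(κ)(x) → 0. -/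
open MeasureTheory Filter Topology

/-- If the set of global minimizers `X* = {x ∈ Ω | f x = f*}` has positive
Lebesgue measure, then as `κ → ∞` the Boltzmann density `m^(κ)` converges pointwise to
`λ(X*)⁻¹` on `X*` and to `0` on `Ω \ X*`. -/
theorem boltzmann_density_limit_of_measure_pos
    (d : ℕ) (hd : 1 ≤ d)
    (Ω : Set (EuclideanSpace ℝ (Fin d)))
    (hΩc : IsCompact Ω)
    (hΩcl : Ω = closure (interior Ω))
    (hΩint : (interior Ω).Nonempty)
    (f : EuclideanSpace ℝ (Fin d) → ℝ)
    (hf : ContinuousOn f Ω)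
    (fstar : ℝ) (hmin : IsLeast (f '' Ω) fstar)
    (m : ℝ → EuclideanSpace ℝ (Fin d) → ℝ)
    (hm : ∀ κ x, m κ x = Real.exp (-κ * f x) / ∫ t in Ω, Real.exp (-κ * f t))
    (hXpos : 0 < volume {x | x ∈ Ω ∧ f x = fstar}) :
    (∀ x ∈ {x | x ∈ Ω ∧ f x = fstar},
      Tendsto (fun κ : ℝ => m κ x) atTop
        (𝓝 ((volume {x | x ∈ Ω ∧ f x = fstar}).toReal⁻¹))) ∧
    (∀ x ∈ Ω \ {x | x ∈ Ω ∧ f x = fstar}, Tendsto (fun κ : ℝ => m κ x) atTop (𝓝 0)) := by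
  set X : Set (EuclideanSpace ℝ (Fin d)) := {x | x ∈ Ω ∧ f x = fstar} with hX
  have hΩmeas : MeasurableSet Ω := hΩc.isClosed.measurableSet
  have hXeq : X = Ω ∩ f ⁻¹' {fstar} := by ext x; simp [hX]
  have hXclosed : IsClosed X := by
    rw [hXeq]
    exact hf.preimage_isClosed_of_isClosed hΩc.isClosed isClosed_singleton
  have hXsub : X ⊆ Ω := fun x hx => hx.1
  have hXfin : volume X < ⊤ := lt_of_le_of_lt (measure_mono hXsub) hΩc.measure_lt_top
  set v : ℝ := (volume X).toReal with hv
  have hvpos : 0 < v := ENNReal.toReal_pos hXpos.ne' hXfin.ne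
  have hfge : ∀ x ∈ Ω, fstar ≤ f x := fun x hx => hmin.2 ⟨x, hx, rfl⟩
  set F : ℝ → EuclideanSpace ℝ (Fin d) → ℝ := fun κ t => Real.exp (-κ * (f t - fstar)) with hF
  have hind : (∫ t in Ω, X.indicator (fun _ => (1:ℝ)) t) = v := by
    rw [setIntegral_indicator hXclosed.measurableSet,
      Set.inter_eq_self_of_subset_right hXsub, setIntegral_const, smul_eq_mul, mul_one]
    rfl
  have hI : Tendsto (fun κ => ∫ t in Ω, F κ t) atTop (𝓝 v) := by
    have key := MeasureTheory.tendsto_integral_filter_of_dominated_convergence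
      (l := atTop) (μ := volume.restrict Ω) (F := F) (f := X.indicator fun _ => (1:ℝ))
      (bound := fun _ => (1:ℝ))
      (Filter.Eventually.of_forall (fun κ =>
        (Real.continuous_exp.comp_continuousOn
          (continuousOn_const.mul (hf.sub continuousOn_const))).aestronglyMeasurable hΩmeas))
      ?_ ?_ ?_
    · rwa [hind] at key
    · filter_upwards [eventually_ge_atTop (0:ℝ)] with κ hκ
      refine ae_restrict_of_forall_mem hΩmeas (fun t ht => ?_)
      have h1 : -κ * (f t - fstar) ≤ 0 :=
        mul_nonpos_of_nonpos_of_nonneg (neg_nonpos.mpr hκ) (sub_nonneg.mpr (hfge t ht))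
      rw [hF]
      rw [Real.norm_eq_abs, abs_of_pos (Real.exp_pos _)]
      exact Real.exp_le_one_iff.mpr h1
    · exact integrableOn_const hΩc.measure_lt_top.ne
    · refine ae_restrict_of_forall_mem hΩmeas (fun t ht => ?_)
      by_cases h : f t = fstar
      · have htX : t ∈ X := ⟨ht, h⟩
        simp only [hF, h, sub_self, mul_zero, Real.exp_zero, Set.indicator_of_mem htX]
        exact tendsto_const_nhds
      · have htX : t ∉ X := fun hmem => h hmem.2
        have hc : 0 < f t - fstar := sub_pos.mpr (lt_of_le_of_ne (hfge t ht) (Ne.symm h))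
        rw [Set.indicator_of_notMem htX]
        have h1 : Tendsto (fun κ : ℝ => κ * (f t - fstar)) atTop atTop :=
          Tendsto.atTop_mul_const hc tendsto_id
        have h2 : Tendsto (fun κ : ℝ => -κ * (f t - fstar)) atTop atBot := by
          simpa [neg_mul] using tendsto_neg_atBot_iff.mpr h1
        exact Real.tendsto_exp_atBot.comp h2
  have hmF : ∀ κ x, m κ x = F κ x / ∫ t in Ω, F κ t := by
    intro κ x
    have hZ : (∫ t in Ω, F κ t) = Real.exp (κ * fstar) * ∫ t in Ω, Real.exp (-κ * f t) := by
      rw [← integral_const_mul]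
      refine setIntegral_congr_fun hΩmeas (fun t ht => ?_)
      rw [hF, ← Real.exp_add]; ring_nf
    have hN : F κ x = Real.exp (κ * fstar) * Real.exp (-κ * f x) := by
      rw [hF, ← Real.exp_add]; ring_nf
    rw [hm, hZ, hN, mul_div_mul_left _ _ (Real.exp_ne_zero _)]
  constructor
  · intro x hx
    have : ∀ κ : ℝ, m κ x = (∫ t in Ω, F κ t)⁻¹ := by
      intro κ
      rw [hmF, hF]
      simp [hx.2]
    simp only [this]
    exact hI.inv₀ hvpos.ne'
  · intro x hx
    have hxΩ : x ∈ Ω := hx.1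
    have hc : 0 < f x - fstar :=
      sub_pos.mpr (lt_of_le_of_ne (hfge x hxΩ) (fun h => hx.2 ⟨hxΩ, h.symm⟩))
    simp only [hmF]
    have h1 : Tendsto (fun κ : ℝ => κ * (f x - fstar)) atTop atTop :=
      Tendsto.atTop_mul_const hc tendsto_id
    have h2 : Tendsto (fun κ : ℝ => F κ x) atTop (𝓝 0) := by
      refine Real.tendsto_exp_atBot.comp ?_
      simpa [neg_mul] using tendsto_neg_atBot_iff.mpr h1
    have h3 := h2.div hI hvpos.ne'; rw [zero_div] at h3; exact h3
end

section
/- The expectation of f under the Boltzmann density converges to the global minimum value: lim_{κ → ∞} ∫_Ω f(x) m^(κ)(x) dx = f*. -/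
open MeasureTheory Filter Topology

/-- The expectation of `f` under the Boltzmann density converges to the
global minimum value `f*` as `κ → ∞`. -/
theorem boltzmann_expectation_tendsto_min
    (d : ℕ) (hd : 1 ≤ d)
    (Ω : Set (EuclideanSpace ℝ (Fin d)))
    (hΩc : IsCompact Ω)
    (hΩcl : Ω = closure (interior Ω))
    (hΩint : (interior Ω).Nonempty)
    (f : EuclideanSpace ℝ (Fin d) → ℝ)
    (hf : ContinuousOn f Ω)
    (fstar : ℝ) (hmin : IsLeast (f '' Ω) fstar)
    (m : ℝ → EuclideanSpace ℝ (Fin d) → ℝ)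
    (hm : ∀ κ x, m κ x = Real.exp (-κ * f x) / ∫ t in Ω, Real.exp (-κ * f t)) :
    Tendsto (fun κ : ℝ => ∫ x in Ω, f x * m κ x) atTop (𝓝 fstar) := by
  classical
  obtain ⟨⟨xs, hxsΩ, hxsf⟩, hlb⟩ := hmin
  have hfs : ∀ x ∈ Ω, fstar ≤ f x := fun x hx => hlb ⟨x, hx, rfl⟩
  have hΩm : MeasurableSet Ω := hΩc.measurableSet
  have hΩfin : volume Ω < ⊤ := hΩc.measure_lt_top
  have hΩpos : (0 : ENNReal) < volume Ω :=
    lt_of_lt_of_le (isOpen_interior.measure_pos volume hΩint)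
      (measure_mono interior_subset)
  have hcexp : ∀ κ : ℝ, ContinuousOn (fun x => Real.exp (-κ * f x)) Ω := fun κ =>
    Real.continuous_exp.comp_continuousOn (continuousOn_const.mul hf)
  have hIexp : ∀ κ : ℝ, IntegrableOn (fun x => Real.exp (-κ * f x)) Ω := fun κ =>
    (hcexp κ).integrableOn_compact hΩc
  have hIfexp : ∀ κ : ℝ, IntegrableOn (fun x => (f x - fstar) * Real.exp (-κ * f x)) Ω :=
    fun κ => ((hf.sub continuousOn_const).mul (hcexp κ)).integrableOn_compact hΩc
  set D : ℝ → ℝ := fun κ => ∫ x in Ω, Real.exp (-κ * f x) with hD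
  set N : ℝ → ℝ := fun κ => ∫ x in Ω, (f x - fstar) * Real.exp (-κ * f x) with hN
  have hDpos : ∀ κ, 0 < D κ := by
    intro κ
    rw [hD]
    rw [setIntegral_pos_iff_support_of_nonneg_ae
      (Filter.Eventually.of_forall fun x => (Real.exp_pos _).le) (hIexp κ)]
    have hsupp : (Function.support fun x => Real.exp (-κ * f x)) = Set.univ := by
      ext x; simp [Real.exp_ne_zero]
    rw [hsupp, Set.univ_inter]
    exact hΩpos
  have hNnonneg : ∀ κ, 0 ≤ N κ := fun κ =>
    setIntegral_nonneg hΩm fun x hx =>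
      mul_nonneg (sub_nonneg.2 (hfs x hx)) (Real.exp_pos _).le
  -- rewrite the expectation
  have key : ∀ κ, (∫ x in Ω, f x * m κ x) = fstar + N κ / D κ := by
    intro κ
    have h1 : (∫ x in Ω, f x * m κ x)
        = (∫ x in Ω, f x * Real.exp (-κ * f x)) / D κ := by
      simp_rw [hm, ← mul_div_assoc]
      rw [integral_div]
    have h2 : (∫ x in Ω, f x * Real.exp (-κ * f x)) = N κ + fstar * D κ := by
      rw [hN, hD, ← integral_const_mul, ← integral_add (hIfexp κ) ((hIexp κ).const_mul _)]
      refine setIntegral_congr_fun hΩm fun x hx => ?_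
      ring
    rw [h1, h2, add_div, mul_div_assoc, div_self (hDpos κ).ne', mul_one, add_comm]
  -- it suffices to show N/D → 0
  have main : Tendsto (fun κ => N κ / D κ) atTop (𝓝 0) := by
    rw [NormedAddCommGroup.tendsto_nhds_zero]
    intro ε hε
    -- bound M' for f - fstar on Ω
    obtain ⟨M, hM⟩ := hΩc.exists_bound_of_continuousOn hf
    set M' : ℝ := M + |fstar| with hM'def
    have hM' : ∀ x ∈ Ω, f x - fstar ≤ M' := by
      intro x hx
      have := hM x hx
      have h1 : f x ≤ M := (le_abs_self _).trans (by simpa using this)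
      have h2 : -fstar ≤ |fstar| := neg_le_abs _
      linarith
    have hM'nonneg : 0 ≤ M' := le_trans (sub_nonneg.2 (hfs xs hxsΩ)) (hM' xs hxsΩ)
    -- small neighborhood of the minimizer inside the interior
    have hxscl : xs ∈ closure (interior Ω) := by rw [← hΩcl]; exact hxsΩ
    have hcw : ContinuousWithinAt f Ω xs := hf xs hxsΩ
    have hpre : f ⁻¹' Set.Iio (fstar + ε / 4) ∈ 𝓝[Ω] xs := by
      apply hcw
      rw [hxsf]
      exact Iio_mem_nhds (by linarith)
    obtain ⟨U, hUopen, hxsU, hUsub⟩ := mem_nhdsWithin.1 hpre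
    set W : Set (EuclideanSpace ℝ (Fin d)) := U ∩ interior Ω with hWdef
    have hWopen : IsOpen W := hUopen.inter isOpen_interior
    have hWne : W.Nonempty := _root_.mem_closure_iff.1 hxscl U hUopen hxsU
    have hWΩ : W ⊆ Ω := fun x hx => interior_subset hx.2
    have hWf : ∀ x ∈ W, f x < fstar + ε / 4 := fun x hx =>
      hUsub ⟨hx.1, hWΩ hx⟩
    have hWfin : volume W < ⊤ := lt_of_le_of_lt (measure_mono hWΩ) hΩfin
    set w : ℝ := (volume W).toReal with hwdef
    have hwpos : 0 < w :=
      ENNReal.toReal_pos (hWopen.measure_pos volume hWne).ne' hWfin.ne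
    set lΩ : ℝ := (volume Ω).toReal with hlΩdef
    have hlΩnonneg : 0 ≤ lΩ := ENNReal.toReal_nonneg
    set C : ℝ := M' * lΩ / w with hCdef
    have hCnonneg : 0 ≤ C := div_nonneg (mul_nonneg hM'nonneg hlΩnonneg) hwpos.le
    -- the quantitative bound for κ ≥ 0
    have hbound : ∀ κ : ℝ, 0 ≤ κ → N κ / D κ ≤ ε / 2 + C * Real.exp (-(κ * (ε / 4))) := by
      intro κ hκ
      -- lower bound for D κ
      have hDlow : Real.exp (-κ * (fstar + ε / 4)) * w ≤ D κ := by
        have step1 : (∫ x in W, Real.exp (-κ * (fstar + ε / 4)))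
            ≤ ∫ x in W, Real.exp (-κ * f x) := by
          refine setIntegral_mono_on
            (integrableOn_const hWfin.ne) ((hIexp κ).mono_set hWΩ)
            hWopen.measurableSet fun x hx => ?_
          apply Real.exp_le_exp.2
          have := (hWf x hx).le
          nlinarith
        have step2 : (∫ x in W, Real.exp (-κ * f x)) ≤ D κ := by
          refine setIntegral_mono_set (hIexp κ)
            (Filter.Eventually.of_forall fun x => (Real.exp_pos _).le)
            (HasSubset.Subset.eventuallyLE hWΩ)
        have step0 : (∫ x in W, Real.exp (-κ * (fstar + ε / 4)))
            = Real.exp (-κ * (fstar + ε / 4)) * w := by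
          rw [setIntegral_const, smul_eq_mul, mul_comm]
          rfl
        linarith [step1, step2, step0.symm.le]
      have hDlowpos : 0 < Real.exp (-κ * (fstar + ε / 4)) * w :=
        mul_pos (Real.exp_pos _) hwpos
      -- upper bound for N κ
      have hNup : N κ ≤ ε / 2 * D κ + M' * Real.exp (-κ * (fstar + ε / 2)) * lΩ := by
        have ptwise : ∀ x ∈ Ω, (f x - fstar) * Real.exp (-κ * f x)
            ≤ ε / 2 * Real.exp (-κ * f x) + M' * Real.exp (-κ * (fstar + ε / 2)) := by
          intro x hx
          by_cases hcase : f x - fstar ≤ ε / 2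
          · have h2 : 0 ≤ M' * Real.exp (-κ * (fstar + ε / 2)) :=
              mul_nonneg hM'nonneg (Real.exp_pos _).le
            nlinarith [Real.exp_pos (-κ * f x)]
          · push_neg at hcase
            have hfx : fstar + ε / 2 ≤ f x := by linarith
            have hexple : Real.exp (-κ * f x) ≤ Real.exp (-κ * (fstar + ε / 2)) := by
              apply Real.exp_le_exp.2
              nlinarith
            have h1 : (f x - fstar) * Real.exp (-κ * f x)
                ≤ M' * Real.exp (-κ * (fstar + ε / 2)) := by
              have := hM' x hx
              have hfpos : 0 ≤ f x - fstar := sub_nonneg.2 (hfs x hx)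
              calc (f x - fstar) * Real.exp (-κ * f x)
                  ≤ M' * Real.exp (-κ * f x) := by
                    exact mul_le_mul_of_nonneg_right this (Real.exp_pos _).le
                _ ≤ M' * Real.exp (-κ * (fstar + ε / 2)) := by
                    exact mul_le_mul_of_nonneg_left hexple hM'nonneg
            nlinarith [Real.exp_pos (-κ * f x)]
        have hint : (∫ x in Ω, ((f x - fstar) * Real.exp (-κ * f x)))
            ≤ ∫ x in Ω, (ε / 2 * Real.exp (-κ * f x)
              + M' * Real.exp (-κ * (fstar + ε / 2))) := by
          refine setIntegral_mono_on (hIfexp κ) ?_ hΩm ptwise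
          exact ((hIexp κ).const_mul _).add (integrableOn_const hΩfin.ne)
        have hsplit : (∫ x in Ω, (ε / 2 * Real.exp (-κ * f x)
              + M' * Real.exp (-κ * (fstar + ε / 2))))
            = ε / 2 * D κ + M' * Real.exp (-κ * (fstar + ε / 2)) * lΩ := by
          rw [integral_add ((hIexp κ).const_mul _) (integrableOn_const hΩfin.ne),
            integral_const_mul, setIntegral_const, smul_eq_mul, hD, mul_comm]
          rw [Measure.real, ← hlΩdef]
          ring
        rw [hN]
        calc (∫ x in Ω, (f x - fstar) * Real.exp (-κ * f x))
            ≤ _ := hint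
          _ = _ := hsplit
      -- combine
      have hstep : N κ / D κ ≤ ε / 2 + M' * Real.exp (-κ * (fstar + ε / 2)) * lΩ / D κ := by
        rw [div_le_iff₀ (hDpos κ)]
        have h3 : 0 ≤ M' * Real.exp (-κ * (fstar + ε / 2)) * lΩ / D κ :=
          div_nonneg (mul_nonneg (mul_nonneg hM'nonneg (Real.exp_pos _).le) hlΩnonneg)
            (hDpos κ).le
        have h4 : M' * Real.exp (-κ * (fstar + ε / 2)) * lΩ / D κ * D κ
            = M' * Real.exp (-κ * (fstar + ε / 2)) * lΩ :=
          div_mul_cancel₀ _ (hDpos κ).ne'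
        nlinarith [hNup]
      have hstep2 : M' * Real.exp (-κ * (fstar + ε / 2)) * lΩ / D κ
          ≤ M' * Real.exp (-κ * (fstar + ε / 2)) * lΩ
            / (Real.exp (-κ * (fstar + ε / 4)) * w) := by
        apply div_le_div_of_nonneg_left _ hDlowpos hDlow
        exact mul_nonneg (mul_nonneg hM'nonneg (Real.exp_pos _).le) hlΩnonneg
      have heq : M' * Real.exp (-κ * (fstar + ε / 2)) * lΩ
            / (Real.exp (-κ * (fstar + ε / 4)) * w)
          = C * Real.exp (-(κ * (ε / 4))) := by
        have hexp : Real.exp (-κ * (fstar + ε / 2))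
            = Real.exp (-(κ * (ε / 4))) * Real.exp (-κ * (fstar + ε / 4)) := by
          rw [← Real.exp_add]; congr 1; ring
        rw [hexp, div_eq_iff hDlowpos.ne', div_mul_eq_mul_div, div_mul_eq_mul_div,
          eq_div_iff hwpos.ne']
        ring
      linarith [hstep, hstep2, heq.le]
    -- conclude
    have hexp0 : Tendsto (fun κ : ℝ => C * Real.exp (-(κ * (ε / 4)))) atTop (𝓝 (C * 0)) := by
      apply Tendsto.const_mul
      exact Real.tendsto_exp_neg_atTop_nhds_zero.comp
        (Tendsto.atTop_mul_const (by positivity) tendsto_id)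
    rw [mul_zero] at hexp0
    have hev : ∀ᶠ κ : ℝ in atTop, C * Real.exp (-(κ * (ε / 4))) < ε / 2 :=
      hexp0.eventually_lt_const (by positivity)
    filter_upwards [hev, eventually_ge_atTop (0 : ℝ)] with κ hκ1 hκ2
    have hratio : 0 ≤ N κ / D κ := div_nonneg (hNnonneg κ) (hDpos κ).le
    rw [Real.norm_eq_abs, abs_of_nonneg hratio]
    calc N κ / D κ ≤ ε / 2 + C * Real.exp (-(κ * (ε / 4))) := hbound κ hκ2
      _ < ε / 2 + ε / 2 := by linarith
      _ = ε := by ring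
  have : Tendsto (fun κ => fstar + N κ / D κ) atTop (𝓝 (fstar + 0)) :=
    tendsto_const_nhds.add main
  rw [add_zero] at this
  exact this.congr fun κ => (key κ).symm
end

section
/- Suppose the set of global minimizers has Lebesgue measure zero, i.e. λ(X*) = 0. Then, as κ → ∞, the nascent minima density diverges on the minimizers and vanishes elsewhere: for every x ∈ X*, m^(κ)(x) → ∞, and for every x ∈ Ω \ X*, m^(κ)(x) → 0. -/
open MeasureTheory Filter Topology

/-- If the set of global minimizers `X* = {x ∈ Ω | f x = f*}` has Lebesgue
measure zero, then as `κ → ∞` the nascent minima density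
`m^(κ)(x) = τ(f x)^κ / ∫_Ω τ(f t)^κ dt` diverges on `X*` and tends to `0` on `Ω \ X*`. -/
theorem nascent_minima_density_limit_of_measure_zero
    (d : ℕ) (hd : 1 ≤ d)
    (Ω : Set (EuclideanSpace ℝ (Fin d)))
    (hΩc : IsCompact Ω)
    (hΩcl : Ω = closure (interior Ω))
    (hΩint : (interior Ω).Nonempty)
    (f : EuclideanSpace ℝ (Fin d) → ℝ)
    (hf : ContinuousOn f Ω)
    (fstar : ℝ) (hmin : IsLeast (f '' Ω) fstar)
    (τ : ℝ → ℝ) (hτ : StrictAnti τ) (hτpos : ∀ y, 0 < τ y)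
    (m : ℝ → EuclideanSpace ℝ (Fin d) → ℝ)
    (hm : ∀ κ x, m κ x = τ (f x) ^ κ / ∫ t in Ω, τ (f t) ^ κ)
    (hX0 : volume {x | x ∈ Ω ∧ f x = fstar} = 0) :
    (∀ x ∈ {x | x ∈ Ω ∧ f x = fstar}, Tendsto (fun κ : ℝ => m κ x) atTop atTop) ∧
    (∀ x ∈ Ω \ {x | x ∈ Ω ∧ f x = fstar}, Tendsto (fun κ : ℝ => m κ x) atTop (𝓝 0)) := by
  have Ωm : MeasurableSet Ω := hΩc.isClosed.measurableSet
  have hΩfin : volume Ω < ⊤ := hΩc.measure_lt_top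
  set M : ℝ := τ fstar with hM
  have hMpos : 0 < M := hτpos fstar
  have hfge : ∀ t ∈ Ω, fstar ≤ f t := fun t ht => hmin.2 ⟨t, ht, rfl⟩
  have hτle : ∀ t ∈ Ω, τ (f t) ≤ M := fun t ht => hτ.antitone (hfge t ht)
  -- measurability
  have hmeas : ∀ κ : ℝ, AEStronglyMeasurable (fun t => τ (f t) ^ κ)
      (volume.restrict Ω) := by
    intro κ
    have hfm : AEMeasurable f (volume.restrict Ω) := hf.aemeasurable Ωm
    exact ((hτ.antitone.measurable.comp_aemeasurable hfm).pow_const κ).aestronglyMeasurable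
  -- integrability for κ ≥ 0
  have hint : ∀ κ : ℝ, 0 ≤ κ → IntegrableOn (fun t => τ (f t) ^ κ) Ω volume := by
    intro κ hκ
    refine Integrable.mono' ((integrableOn_const hΩfin.ne : IntegrableOn (fun _ => M ^ κ) Ω volume)) (hmeas κ) ?_
    filter_upwards [ae_restrict_mem Ωm] with t ht
    rw [Real.norm_eq_abs, abs_of_nonneg (Real.rpow_nonneg (hτpos (f t)).le κ)]
    exact Real.rpow_le_rpow (hτpos (f t)).le (hτle t ht) hκ
  set I : ℝ → ℝ := fun κ => ∫ t in Ω, τ (f t) ^ κ with hI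
  -- lower bound construction
  have key : ∀ δ : ℝ, 0 < δ → ∃ v : ℝ, 0 < v ∧
      ∀ κ : ℝ, 0 ≤ κ → τ (fstar + δ) ^ κ * v ≤ I κ := by
    intro δ hδ
    obtain ⟨xs, hxsΩ, hxsf⟩ := hmin.1
    obtain ⟨V, hVopen, hVeq⟩ := continuousOn_iff'.1 hf (Set.Iio (fstar + δ)) isOpen_Iio
    have hxsV : xs ∈ V ∩ Ω := by
      rw [← hVeq]
      exact ⟨by simp [hxsf, hδ], hxsΩ⟩
    have hxscl : xs ∈ closure (interior Ω) := hΩcl ▸ hxsV.2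
    have hW : (V ∩ interior Ω).Nonempty := by
      rcases mem_closure_iff.1 hxscl V hVopen hxsV.1 with ⟨y, hy⟩
      exact ⟨y, hy⟩
    set W := V ∩ interior Ω with hWdef
    have hWopen : IsOpen W := hVopen.inter isOpen_interior
    have hWsub : W ⊆ Ω := fun t ht => interior_subset ht.2
    have hWpos : 0 < volume W := hWopen.measure_pos volume hW
    have hWfin : volume W < ⊤ := lt_of_le_of_lt (measure_mono hWsub) hΩfin
    refine ⟨(volume W).toReal, ENNReal.toReal_pos hWpos.ne' hWfin.ne, fun κ hκ => ?_⟩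
    have hWlt : ∀ t ∈ W, f t < fstar + δ := by
      intro t ht
      have : t ∈ V ∩ Ω := ⟨ht.1, hWsub ht⟩
      rw [← hVeq] at this
      exact this.1
    have h1 : τ (fstar + δ) ^ κ * (volume W).toReal = ∫ _ in W, τ (fstar + δ) ^ κ := by
      rw [setIntegral_const, smul_eq_mul, measureReal_def]; ring
    rw [h1]
    have hIW : IntegrableOn (fun t => τ (f t) ^ κ) W volume :=
      (hint κ hκ).mono_set hWsub
    have h2 : ∫ _ in W, τ (fstar + δ) ^ κ ≤ ∫ t in W, τ (f t) ^ κ := by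
      refine setIntegral_mono_on (integrableOn_const hWfin.ne) hIW
        hWopen.measurableSet (fun t ht => ?_)
      exact Real.rpow_le_rpow (hτpos _).le (hτ (hWlt t ht)).le hκ
    have h3 : ∫ t in W, τ (f t) ^ κ ≤ I κ := by
      refine setIntegral_mono_set (hint κ hκ) ?_ (HasSubset.Subset.eventuallyLE hWsub)
      filter_upwards with t using Real.rpow_nonneg (hτpos _).le κ
    linarith
  obtain ⟨v0, hv0, hlow0⟩ := key 1 one_pos
  have hc0 : 0 < τ (fstar + 1) := hτpos _
  have hIpos : ∀ κ : ℝ, 0 ≤ κ → 0 < I κ := fun κ hκ =>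
    lt_of_lt_of_le (by positivity) (hlow0 κ hκ)
  -- dominated convergence : ∫ (τ(f t)/M)^κ → 0
  have hJ : Tendsto (fun κ : ℝ => ∫ t in Ω, (τ (f t) / M) ^ κ) atTop (𝓝 0) := by
    have h0 : (0 : ℝ) = ∫ _ in Ω, (0 : ℝ) := by simp
    rw [h0]
    refine tendsto_integral_filter_of_dominated_convergence (fun _ => (1 : ℝ)) ?_ ?_
      (integrableOn_const hΩfin.ne) ?_
    · filter_upwards with κ
      have hfm : AEMeasurable f (volume.restrict Ω) := hf.aemeasurable Ωm
      exact (((hτ.antitone.measurable.comp_aemeasurable hfm).div_const M).pow_const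
        κ).aestronglyMeasurable
    · filter_upwards [eventually_ge_atTop (0 : ℝ)] with κ hκ
      filter_upwards [ae_restrict_mem Ωm] with t ht
      have h1 : τ (f t) / M ≤ 1 := (div_le_one hMpos).2 (hτle t ht)
      have h2 : 0 ≤ τ (f t) / M := div_nonneg (hτpos _).le hMpos.le
      rw [Real.norm_eq_abs, abs_of_nonneg (Real.rpow_nonneg h2 κ)]
      exact Real.rpow_le_one h2 h1 hκ
    · have hes : ∀ᵐ t ∂(volume.restrict Ω), ¬(t ∈ Ω ∧ f t = fstar) := by
        refine (ae_iff.2 ?_)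
        simp only [not_not]
        exact le_antisymm ((Measure.restrict_apply_le _ _).trans hX0.le) (zero_le)
      filter_upwards [ae_restrict_mem Ωm, hes] with t ht hne
      have hflt : fstar < f t := lt_of_le_of_ne (hfge t ht) (fun h => hne ⟨ht, h.symm⟩)
      have hlt : τ (f t) / M < 1 := (div_lt_one hMpos).2 (hτ hflt)
      have hge : 0 ≤ τ (f t) / M := div_nonneg (hτpos _).le hMpos.le
      exact tendsto_rpow_atTop_of_base_lt_one _ (by linarith) hlt
  constructor
  · rintro x ⟨hxΩ, hxf⟩
    have hrw : ∀ κ : ℝ, 0 ≤ κ → I κ / M ^ κ = ∫ t in Ω, (τ (f t) / M) ^ κ := by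
      intro κ hκ
      rw [eq_comm]
      calc ∫ t in Ω, (τ (f t) / M) ^ κ = ∫ t in Ω, τ (f t) ^ κ / M ^ κ := by
            refine setIntegral_congr_fun Ωm (fun t ht => ?_)
            exact Real.div_rpow (hτpos _).le hMpos.le κ
        _ = I κ / M ^ κ := by rw [integral_div]
    have hquot : Tendsto (fun κ : ℝ => I κ / M ^ κ) atTop (𝓝[>] 0) := by
      rw [tendsto_nhdsWithin_iff]
      constructor
      · refine hJ.congr' ?_
        filter_upwards [eventually_ge_atTop (0 : ℝ)] with κ hκ using (hrw κ hκ).symm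
      · filter_upwards [eventually_ge_atTop (0 : ℝ)] with κ hκ
        exact div_pos (hIpos κ hκ) (Real.rpow_pos_of_pos hMpos κ)
    have := hquot.inv_tendsto_nhdsGT_zero
    refine this.congr' ?_
    filter_upwards [eventually_ge_atTop (0 : ℝ)] with κ hκ
    rw [hm κ x, hxf]
    simp only [Pi.inv_apply, inv_div]
    rfl
  · rintro x ⟨hxΩ, hxn⟩
    have hflt : fstar < f x :=
      lt_of_le_of_ne (hfge x hxΩ) (fun h => hxn ⟨hxΩ, h.symm⟩)
    set δ : ℝ := (f x - fstar) / 2 with hδdef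
    have hδ : 0 < δ := by simp only [hδdef]; linarith
    obtain ⟨v, hv, hlo⟩ := key δ hδ
    set c : ℝ := τ (fstar + δ) with hc
    have hcpos : 0 < c := hτpos _
    have hlt : τ (f x) < c := hτ (by simp only [hδdef]; linarith)
    have hr1 : τ (f x) / c < 1 := (div_lt_one hcpos).2 hlt
    have hr0 : 0 ≤ τ (f x) / c := div_nonneg (hτpos _).le hcpos.le
    have hbound : Tendsto (fun κ : ℝ => (τ (f x) / c) ^ κ / v) atTop (𝓝 0) := by
      have := (tendsto_rpow_atTop_of_base_lt_one _ (by linarith) hr1).div_const v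
      simpa using this
    refine squeeze_zero' ?_ ?_ hbound
    · filter_upwards [eventually_ge_atTop (0 : ℝ)] with κ hκ
      rw [hm κ x]
      exact div_nonneg (Real.rpow_nonneg (hτpos _).le κ) (hIpos κ hκ).le
    · filter_upwards [eventually_ge_atTop (0 : ℝ)] with κ hκ
      rw [hm κ x]
      have h1 : τ (f x) ^ κ / I κ ≤ τ (f x) ^ κ / (c ^ κ * v) := by
        refine div_le_div_of_nonneg_left (Real.rpow_nonneg (hτpos _).le κ) ?_ (hlo κ hκ)
        positivity
      refine h1.trans (le_of_eq ?_)
      rw [Real.div_rpow (hτpos _).le hcpos.le, div_div]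
end

section
/- Suppose the set of global minimizers has positive Lebesgue measure, i.e. λ(X*) > 0. Then, as κ → ∞, the nascent minima density converges pointwise to the uniform density on the minimizers: for every x ∈ X*, m^(κ)(x) → λ(X*)^{-1}, and for every x ∈ Ω \ X*, m^(κ)(x) → 0. -/
open MeasureTheory Filter Topology

/-- If the set of global minimizers `X* = {x ∈ Ω | f x = f*}` has positive
Lebesgue measure, then as `κ → ∞` the nascent minima density converges pointwise to
`λ(X*)⁻¹` on `X*` and to `0` on `Ω \ X*`. -/
theorem nascent_minima_density_limit_of_measure_pos
    (d : ℕ) (hd : 1 ≤ d)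
    (Ω : Set (EuclideanSpace ℝ (Fin d)))
    (hΩc : IsCompact Ω)
    (hΩcl : Ω = closure (interior Ω))
    (hΩint : (interior Ω).Nonempty)
    (f : EuclideanSpace ℝ (Fin d) → ℝ)
    (hf : ContinuousOn f Ω)
    (fstar : ℝ) (hmin : IsLeast (f '' Ω) fstar)
    (τ : ℝ → ℝ) (hτ : StrictAnti τ) (hτpos : ∀ y, 0 < τ y)
    (m : ℝ → EuclideanSpace ℝ (Fin d) → ℝ)
    (hm : ∀ κ x, m κ x = τ (f x) ^ κ / ∫ t in Ω, τ (f t) ^ κ)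
    (hXpos : 0 < volume {x | x ∈ Ω ∧ f x = fstar}) :
    (∀ x ∈ {x | x ∈ Ω ∧ f x = fstar},
      Tendsto (fun κ : ℝ => m κ x) atTop
        (𝓝 ((volume {x | x ∈ Ω ∧ f x = fstar}).toReal⁻¹))) ∧
    (∀ x ∈ Ω \ {x | x ∈ Ω ∧ f x = fstar}, Tendsto (fun κ : ℝ => m κ x) atTop (𝓝 0)) := by
  set S : Set (EuclideanSpace ℝ (Fin d)) := {x | x ∈ Ω ∧ f x = fstar} with hSdef
  set M : ℝ := τ fstar with hMdef
  have hM : 0 < M := hτpos fstar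
  set g : EuclideanSpace ℝ (Fin d) → ℝ := fun t => τ (f t) / M with hgdef
  have hg_pos : ∀ t, 0 < g t := fun t => div_pos (hτpos (f t)) hM
  have hfstar_le : ∀ t ∈ Ω, fstar ≤ f t := fun t ht => hmin.2 ⟨t, ht, rfl⟩
  have hg_le : ∀ t ∈ Ω, g t ≤ 1 := fun t ht =>
    (div_le_one hM).2 (hτ.antitone (hfstar_le t ht))
  have hΩm : MeasurableSet Ω := hΩc.measurableSet
  have hSsub : S ⊆ Ω := fun x hx => hx.1
  have hSm : MeasurableSet S := by
    have : S = Ω ∩ f ⁻¹' {fstar} := by ext x; simp [hSdef, Set.mem_setOf_eq]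
    rw [this]
    exact (hf.preimage_isClosed_of_isClosed hΩc.isClosed isClosed_singleton).measurableSet
  have hSfin : volume S ≠ ⊤ :=
    ((measure_mono hSsub).trans_lt hΩc.measure_lt_top).ne
  set L : ℝ := (volume S).toReal with hLdef
  have hL : 0 < L := ENNReal.toReal_pos hXpos.ne' hSfin
  -- measurability of g^κ
  haveI : Fact (volume Ω < ⊤) := ⟨hΩc.measure_lt_top⟩
  have hgm : AEMeasurable g (volume.restrict Ω) := by
    exact ((hτ.antitone.measurable).comp_aemeasurable (hf.aemeasurable hΩm)).div_const M
  have hgκm : ∀ κ : ℝ, AEMeasurable (fun t => g t ^ κ) (volume.restrict Ω) := by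
    intro κ
    have heq : (fun t => g t ^ κ) = fun t => Real.exp (Real.log (g t) * κ) := by
      funext t
      rw [Real.rpow_def_of_pos (hg_pos t)]
    rw [heq]
    exact Real.measurable_exp.comp_aemeasurable
      ((Real.measurable_log.comp_aemeasurable hgm).mul_const κ)
  -- the key integral limit
  have hI : Tendsto (fun κ : ℝ => ∫ t in Ω, g t ^ κ) atTop (𝓝 L) := by
    have key := MeasureTheory.tendsto_integral_filter_of_dominated_convergence
      (μ := volume.restrict Ω) (l := atTop) (F := fun κ : ℝ => fun t => g t ^ κ)
      (f := S.indicator (fun _ => (1 : ℝ))) (bound := fun _ => (1 : ℝ))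
      (Eventually.of_forall fun κ => (hgκm κ).aestronglyMeasurable)
      ?_ ?_ ?_
    · have : ∫ t in Ω, S.indicator (fun _ => (1 : ℝ)) t = L := by
        rw [MeasureTheory.integral_indicator hSm, Measure.restrict_restrict hSm,
          Set.inter_eq_self_of_subset_left hSsub]
        simp [hLdef]
        rfl
      rwa [this] at key
    · filter_upwards [eventually_ge_atTop (0 : ℝ)] with κ hκ
      filter_upwards [ae_restrict_mem hΩm] with t ht
      rw [Real.norm_eq_abs, abs_of_nonneg (Real.rpow_nonneg (hg_pos t).le κ)]
      exact Real.rpow_le_one (hg_pos t).le (hg_le t ht) hκ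
    · exact (integrable_const 1)
    · filter_upwards [ae_restrict_mem hΩm] with t ht
      by_cases hts : t ∈ S
      · have : g t = 1 := by
          rw [hgdef]; simp only; rw [hts.2, ← hMdef, div_self hM.ne']
        simp only [this, Real.one_rpow, Set.indicator_of_mem hts]
        exact tendsto_const_nhds
      · have hlt : g t < 1 := by
          have hne : f t ≠ fstar := fun h => hts ⟨ht, h⟩
          have : fstar < f t := lt_of_le_of_ne (hfstar_le t ht) (Ne.symm hne)
          exact (div_lt_one hM).2 (hτ this)
        rw [Set.indicator_of_notMem hts]
        exact tendsto_rpow_atTop_of_base_lt_one _ (by linarith [hg_pos t]) hlt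
  -- denominator identity
  have hden : ∀ κ : ℝ, (∫ t in Ω, τ (f t) ^ κ) = M ^ κ * ∫ t in Ω, g t ^ κ := by
    intro κ
    rw [← MeasureTheory.integral_const_mul]
    congr 1
    ext t
    rw [← Real.mul_rpow hM.le (hg_pos t).le, hgdef]
    simp only
    rw [mul_div_cancel₀ _ hM.ne']
  constructor
  · intro x hx
    have hfx : τ (f x) = M := by rw [hx.2, hMdef]
    have heq : ∀ κ : ℝ, m κ x = 1 / ∫ t in Ω, g t ^ κ := by
      intro κ
      rw [hm, hfx, hden κ]
      rw [div_mul_eq_div_div, div_self (Real.rpow_pos_of_pos hM κ).ne']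
    simp only [heq]
    have := (tendsto_const_nhds (α := ℝ) (x := (1:ℝ))).div hI hL.ne'
    rwa [one_div] at this
  · intro x hx
    have hxΩ : x ∈ Ω := hx.1
    have hne : f x ≠ fstar := fun h => hx.2 ⟨hxΩ, h⟩
    have hlt : τ (f x) < M := hτ (lt_of_le_of_ne (hfstar_le x hxΩ) (Ne.symm hne))
    have heq : ∀ κ : ℝ, m κ x = (τ (f x) / M) ^ κ / ∫ t in Ω, g t ^ κ := by
      intro κ
      rw [hm, hden κ, Real.div_rpow (hτpos (f x)).le hM.le, div_mul_eq_div_div]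
    simp only [heq]
    have h0 : Tendsto (fun κ : ℝ => (τ (f x) / M) ^ κ) atTop (𝓝 0) := by
      refine tendsto_rpow_atTop_of_base_lt_one _ ?_ ((div_lt_one hM).2 hlt)
      have := div_pos (hτpos (f x)) hM
      linarith
    have := h0.div hI hL.ne'
    rwa [zero_div] at this
end

section
/- The expectation of f under the nascent minima density converges to the global minimum value: lim_{κ → ∞} ∫_Ω f(x) m^(κ)(x) dx = f*. -/
open MeasureTheory Filter Topology

/-- The expectation of `f` under the nascent minima density converges to the
global minimum value `f*` as `κ → ∞`. -/
theorem nascent_minima_expectation_tendsto_min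
    (d : ℕ) (hd : 1 ≤ d)
    (Ω : Set (EuclideanSpace ℝ (Fin d)))
    (hΩc : IsCompact Ω)
    (hΩcl : Ω = closure (interior Ω))
    (hΩint : (interior Ω).Nonempty)
    (f : EuclideanSpace ℝ (Fin d) → ℝ)
    (hf : ContinuousOn f Ω)
    (fstar : ℝ) (hmin : IsLeast (f '' Ω) fstar)
    (τ : ℝ → ℝ) (hτ : StrictAnti τ) (hτpos : ∀ y, 0 < τ y)
    (m : ℝ → EuclideanSpace ℝ (Fin d) → ℝ)
    (hm : ∀ κ x, m κ x = τ (f x) ^ κ / ∫ t in Ω, τ (f t) ^ κ) :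
    Tendsto (fun κ : ℝ => ∫ x in Ω, f x * m κ x) atTop (𝓝 fstar) := by
  classical
  have hΩmeas : MeasurableSet Ω := hΩc.measurableSet
  have hΩfin : volume Ω < ⊤ := hΩc.measure_lt_top
  obtain ⟨xmin, hxminΩ, hxminf⟩ : ∃ x ∈ Ω, f x = fstar := by
    obtain ⟨x, hx, hfx⟩ := hmin.1
    exact ⟨x, hx, hfx⟩
  have hΩne : Ω.Nonempty := ⟨xmin, hxminΩ⟩
  obtain ⟨xmax, hxmaxΩ, hxmax⟩ := hΩc.exists_isMaxOn hΩne hf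
  set M : ℝ := f xmax - fstar with hM
  have hflb : ∀ x ∈ Ω, fstar ≤ f x := fun x hx => hmin.2 ⟨x, hx, rfl⟩
  have hfub : ∀ x ∈ Ω, f x ≤ f xmax := fun x hx => hxmax hx
  have hM0 : 0 ≤ M := sub_nonneg.2 (hflb _ hxmaxΩ)
  set g : EuclideanSpace ℝ (Fin d) → ℝ := fun x => τ (f x) with hg
  have hgpos : ∀ x, 0 < g x := fun x => hτpos _
  set T : ℝ := τ fstar with hT
  have hTpos : 0 < T := hτpos _
  have hg_ub : ∀ x ∈ Ω, g x ≤ T := fun x hx => hτ.antitone (hflb x hx)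
  -- measurability
  have hfmeas : AEMeasurable f (volume.restrict Ω) := hf.aemeasurable hΩmeas
  have hτmeas : Measurable τ := hτ.antitone.measurable
  have hgmeas : AEMeasurable g (volume.restrict Ω) := hτmeas.comp_aemeasurable hfmeas
  have hgκmeas : ∀ κ : ℝ, AEMeasurable (fun x => g x ^ κ) (volume.restrict Ω) := by
    intro κ
    have : (fun x => g x ^ κ) = fun x => Real.exp (Real.log (g x) * κ) := by
      funext x; rw [Real.rpow_def_of_pos (hgpos x)]
    rw [this]
    exact (Real.measurable_exp.comp (Real.measurable_log.mul_const κ)).comp_aemeasurable hgmeas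
  have hgκnn : ∀ (κ : ℝ) (x : _), 0 ≤ g x ^ κ := fun κ x => (Real.rpow_pos_of_pos (hgpos x) κ).le
  -- integrability of g^κ and f * g^κ on Ω
  have hint : ∀ κ : ℝ, 0 ≤ κ → IntegrableOn (fun x => g x ^ κ) Ω := by
    intro κ hκ
    refine Integrable.mono' (g := fun _ => T ^ κ) (integrableOn_const hΩfin.ne) (hgκmeas κ).aestronglyMeasurable ?_
    filter_upwards [ae_restrict_mem hΩmeas] with x hx
    rw [Real.norm_eq_abs, abs_of_nonneg (hgκnn κ x)]
    exact Real.rpow_le_rpow (hgpos x).le (hg_ub x hx) hκ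
  have hintf : ∀ κ : ℝ, 0 ≤ κ → IntegrableOn (fun x => f x * g x ^ κ) Ω := by
    intro κ hκ
    refine Integrable.mono' (g := fun _ => (|fstar| + M) * T ^ κ) (integrableOn_const hΩfin.ne)
      (hfmeas.mul (hgκmeas κ)).aestronglyMeasurable ?_
    filter_upwards [ae_restrict_mem hΩmeas] with x hx
    rw [Real.norm_eq_abs, abs_mul, abs_of_nonneg (hgκnn κ x)]
    have h1 : |f x| ≤ |fstar| + M := by
      rw [abs_le]; constructor
      · have := hflb x hx; have := neg_abs_le fstar; nlinarith
      · have := hfub x hx; have := le_abs_self fstar; nlinarith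
    exact mul_le_mul h1 (Real.rpow_le_rpow (hgpos x).le (hg_ub x hx) hκ)
      (hgκnn κ x) (by positivity)
  set Z : ℝ → ℝ := fun κ => ∫ t in Ω, g t ^ κ with hZ
  -- main proof: metric characterization
  rw [Metric.tendsto_atTop]
  intro ε hε
  -- the set A of near-minimizers with positive measure
  have hc4 : fstar < fstar + ε / 4 := by linarith
  have hmem : f ⁻¹' Set.Iio (fstar + ε / 4) ∈ 𝓝[Ω] xmin := by
    have := hf xmin hxminΩ
    exact this (Iio_mem_nhds (by rw [hxminf]; exact hc4))
  obtain ⟨U, hUopen, hxU, hUsub⟩ := mem_nhdsWithin.1 hmem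
  set A : Set (EuclideanSpace ℝ (Fin d)) := U ∩ interior Ω with hA
  have hAopen : IsOpen A := hUopen.inter isOpen_interior
  have hAne : A.Nonempty := by
    have hxcl : xmin ∈ closure (interior Ω) := hΩcl ▸ hxminΩ
    exact mem_closure_iff.1 hxcl U hUopen hxU
  have hAsubΩ : A ⊆ Ω := fun x hx => interior_subset hx.2
  have hAf : ∀ x ∈ A, f x < fstar + ε / 4 := fun x hx =>
    hUsub ⟨hx.1, hAsubΩ hx⟩
  have hAvolpos : 0 < volume A := hAopen.measure_pos volume hAne
  have hAvolfin : volume A < ⊤ := lt_of_le_of_lt (measure_mono hAsubΩ) hΩfin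
  set δ : ℝ := (volume A).toReal with hδ
  have hδpos : 0 < δ := ENNReal.toReal_pos hAvolpos.ne' hAvolfin.ne
  set a : ℝ := τ (fstar + ε / 4) with ha
  set b : ℝ := τ (fstar + ε / 2) with hb
  have hapos : 0 < a := hτpos _
  have hbpos : 0 < b := hτpos _
  have hba : b < a := hτ (by linarith)
  have hAg : ∀ x ∈ A, a ≤ g x := fun x hx => (hτ (hAf x hx)).le
  set volΩ : ℝ := (volume Ω).toReal with hvolΩ
  have hvolΩnn : 0 ≤ volΩ := ENNReal.toReal_nonneg
  -- Z lower bound: Z κ ≥ a^κ * δ  for κ ≥ 0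
  have hZlb : ∀ κ : ℝ, 0 ≤ κ → a ^ κ * δ ≤ Z κ := by
    intro κ hκ
    have h1 : ∫ _x in A, a ^ κ ≤ ∫ x in A, g x ^ κ := by
      refine setIntegral_mono_on (integrableOn_const hAvolfin.ne)
        ((hint κ hκ).mono_set hAsubΩ) hAopen.measurableSet ?_
      exact fun x hx => Real.rpow_le_rpow hapos.le (hAg x hx) hκ
    have h2 : ∫ x in A, g x ^ κ ≤ Z κ := by
      refine setIntegral_mono_set (hint κ hκ) ?_ (HasSubset.Subset.eventuallyLE hAsubΩ)
      filter_upwards [ae_restrict_mem hΩmeas] with x _ using hgκnn κ x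
    have h3 : (∫ _x in A, a ^ κ) = δ * a ^ κ := by
      rw [setIntegral_const]; simp [hδ, smul_eq_mul, measureReal_def]
    calc a ^ κ * δ = ∫ _x in A, a ^ κ := by rw [h3]; ring
      _ ≤ ∫ x in A, g x ^ κ := h1
      _ ≤ Z κ := h2
  have hZpos : ∀ κ : ℝ, 0 ≤ κ → 0 < Z κ := fun κ hκ =>
    lt_of_lt_of_le (by positivity) (hZlb κ hκ)
  -- decay of (b/a)^κ
  have hratio : Tendsto (fun κ : ℝ => M * volΩ / δ * (b / a) ^ κ) atTop (𝓝 0) := by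
    have h0 : Tendsto (fun κ : ℝ => (b / a) ^ κ) atTop (𝓝 0) :=
      tendsto_rpow_atTop_of_base_lt_one _
        (by nlinarith [div_pos hbpos hapos]) ((div_lt_one hapos).2 hba)
    simpa using h0.const_mul (M * volΩ / δ)
  have hev : ∀ᶠ κ : ℝ in atTop, M * volΩ / δ * (b / a) ^ κ < ε / 2 :=
    hratio.eventually_lt_const (by linarith)
  obtain ⟨K, hK⟩ := Filter.eventually_atTop.1 (hev.and (eventually_ge_atTop (0:ℝ)))
  refine ⟨K, fun κ hκ => ?_⟩
  obtain ⟨hrat, hκ0⟩ := hK κ hκ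
  have hZp : 0 < Z κ := hZpos κ hκ0
  have haκ : 0 < a ^ κ := Real.rpow_pos_of_pos hapos κ
  have hbκ : 0 < b ^ κ := Real.rpow_pos_of_pos hbpos κ
  -- rewrite the expectation
  have hE : ∫ x in Ω, f x * m κ x = (∫ x in Ω, f x * g x ^ κ) / Z κ := by
    simp only [hm]
    rw [← integral_div]
    congr 1; funext x; ring
  -- the numerator
  set N : ℝ := ∫ x in Ω, (f x - fstar) * g x ^ κ with hN
  have hNint : (∫ x in Ω, f x * g x ^ κ) = N + fstar * Z κ := by
    have h1 : N = (∫ x in Ω, f x * g x ^ κ) - fstar * Z κ := by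
      rw [hN]
      have : (fun x => (f x - fstar) * g x ^ κ) =
          fun x => f x * g x ^ κ - fstar * g x ^ κ := by funext x; ring
      rw [this, integral_sub (hintf κ hκ0) ((hint κ hκ0).const_mul fstar),
        integral_const_mul]
    linarith
  have hN0 : 0 ≤ N := by
    refine setIntegral_nonneg hΩmeas fun x hx => ?_
    exact mul_nonneg (sub_nonneg.2 (hflb x hx)) (hgκnn κ x)
  -- upper bound on N
  have hNub : N ≤ ε / 2 * Z κ + M * b ^ κ * volΩ := by
    have hptwise : ∀ x ∈ Ω, (f x - fstar) * g x ^ κ ≤ ε / 2 * g x ^ κ + M * b ^ κ := by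
      intro x hx
      rcases lt_or_ge (f x) (fstar + ε / 2) with hcase | hcase
      · have h1 : (f x - fstar) * g x ^ κ ≤ ε / 2 * g x ^ κ :=
          mul_le_mul_of_nonneg_right (by linarith) (hgκnn κ x)
        nlinarith
      · have hgb : g x ≤ b := hτ.antitone hcase
        have h1 : g x ^ κ ≤ b ^ κ := Real.rpow_le_rpow (hgpos x).le hgb hκ0
        have h2 : (f x - fstar) * g x ^ κ ≤ M * b ^ κ := by
          have := hfub x hx
          exact mul_le_mul (by linarith) h1 (hgκnn κ x) hM0
        have h3 : 0 ≤ ε / 2 * g x ^ κ := mul_nonneg (by linarith) (hgκnn κ x)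
        exact h2.trans (le_add_of_nonneg_left h3)
    have hrhs : IntegrableOn (fun x => ε / 2 * g x ^ κ + M * b ^ κ) Ω := by
      exact ((hint κ hκ0).const_mul (ε / 2)).add (integrableOn_const hΩfin.ne)
    have hlhs : IntegrableOn (fun x => (f x - fstar) * g x ^ κ) Ω := by
      have : (fun x => (f x - fstar) * g x ^ κ) =
          fun x => f x * g x ^ κ - fstar * g x ^ κ := by funext x; ring
      rw [this]; exact (hintf κ hκ0).sub ((hint κ hκ0).const_mul fstar)
    calc N ≤ ∫ x in Ω, (ε / 2 * g x ^ κ + M * b ^ κ) :=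
          setIntegral_mono_on hlhs hrhs hΩmeas hptwise
      _ = ε / 2 * Z κ + M * b ^ κ * volΩ := by
          rw [integral_add ((hint κ hκ0).const_mul (ε / 2))
            (integrableOn_const hΩfin.ne), integral_const_mul, setIntegral_const]
          simp [hvolΩ, smul_eq_mul, measureReal_def]; ring
  -- conclude
  have hEq : (∫ x in Ω, f x * m κ x) - fstar = N / Z κ := by
    rw [hE, hNint, add_div, mul_div_assoc, div_self hZp.ne', mul_one]
    ring
  rw [Real.dist_eq, hEq, abs_of_nonneg (div_nonneg hN0 hZp.le)]
  have hstep1 : N / Z κ ≤ ε / 2 + M * b ^ κ * volΩ / Z κ := by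
    have h := div_le_div_of_nonneg_right hNub hZp.le
    rw [add_div, mul_div_assoc, div_self hZp.ne', mul_one] at h
    exact h
  have hstep2 : M * b ^ κ * volΩ / Z κ ≤ M * b ^ κ * volΩ / (a ^ κ * δ) := by
    refine div_le_div_of_nonneg_left ?_ (by positivity) (hZlb κ hκ0)
    positivity
  have hstep3 : M * b ^ κ * volΩ / (a ^ κ * δ) = M * volΩ / δ * (b / a) ^ κ := by
    rw [Real.div_rpow hbpos.le hapos.le]
    field_simp
  calc N / Z κ ≤ ε / 2 + M * b ^ κ * volΩ / Z κ := hstep1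
    _ ≤ ε / 2 + M * b ^ κ * volΩ / (a ^ κ * δ) := by linarith
    _ = ε / 2 + M * volΩ / δ * (b / a) ^ κ := by rw [hstep3]
    _ < ε / 2 + ε / 2 := by linarith
    _ = ε := by ring
end

section
/- If f has a unique global minimizer on Ω, i.e. X* = {x*}, then the barycenter of the nascent minima density converges to that minimizer: lim_{κ → ∞} ∫_Ω x · m^(κ)(x) dx = x* (the limit is taken in ℝ^d, componentwise or in norm). -/
open MeasureTheory Filter Topology

/-- If `f` has a unique global minimizer `x*` on `Ω`, then the barycenter of
the nascent minima density converges to `x*` as `κ → ∞`. -/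
theorem nascent_minima_barycenter_tendsto_minimizer
    (d : ℕ) (hd : 1 ≤ d)
    (Ω : Set (EuclideanSpace ℝ (Fin d)))
    (hΩc : IsCompact Ω)
    (hΩcl : Ω = closure (interior Ω))
    (hΩint : (interior Ω).Nonempty)
    (f : EuclideanSpace ℝ (Fin d) → ℝ)
    (hf : ContinuousOn f Ω)
    (fstar : ℝ) (hmin : IsLeast (f '' Ω) fstar)
    (τ : ℝ → ℝ) (hτ : StrictAnti τ) (hτpos : ∀ y, 0 < τ y)
    (m : ℝ → EuclideanSpace ℝ (Fin d) → ℝ)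
    (hm : ∀ κ x, m κ x = τ (f x) ^ κ / ∫ t in Ω, τ (f t) ^ κ)
    (xstar : EuclideanSpace ℝ (Fin d))
    (hX : {x | x ∈ Ω ∧ f x = fstar} = {xstar}) :
    Tendsto (fun κ : ℝ => ∫ x in Ω, m κ x • x) atTop (𝓝 xstar) := by
  have hxmem : xstar ∈ Ω ∧ f xstar = fstar := by
    have : xstar ∈ ({xstar} : Set (EuclideanSpace ℝ (Fin d))) := rfl
    rw [← hX] at this
    exact this
  obtain ⟨hxΩ, hfx⟩ := hxmem
  have hΩne : Ω.Nonempty := ⟨xstar, hxΩ⟩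
  have hΩm : MeasurableSet Ω := hΩc.measurableSet
  have hfge : ∀ x ∈ Ω, fstar ≤ f x := fun x hx => hmin.2 ⟨x, hx, rfl⟩
  obtain ⟨z, hzΩ, hzmax⟩ := hΩc.exists_isMaxOn hΩne hf
  set a := τ (f z) with ha_def
  set b := τ fstar with hb_def
  have ha : 0 < a := hτpos _
  have hbpos : 0 < b := hτpos _
  have hga : ∀ x ∈ Ω, a ≤ τ (f x) := fun x hx => hτ.antitone (hzmax hx)
  have hgb : ∀ x ∈ Ω, τ (f x) ≤ b := fun x hx => hτ.antitone (hfge x hx)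
  -- measurability
  have hgae : AEMeasurable (fun x => τ (f x)) (volume.restrict Ω) :=
    hτ.antitone.measurable.comp_aemeasurable (hf.aemeasurable hΩm)
  have hκmeas : ∀ κ : ℝ, 0 ≤ κ →
      AEStronglyMeasurable (fun x => τ (f x) ^ κ) (volume.restrict Ω) :=
    fun κ hκ => (((Real.continuous_rpow_const hκ).measurable).comp_aemeasurable
      hgae).aestronglyMeasurable
  have hμΩ_lt : volume Ω < ⊤ := hΩc.measure_lt_top
  have hμΩ_pos : 0 < (volume Ω).toReal := by
    refine ENNReal.toReal_pos ?_ hμΩ_lt.ne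
    have h1 : 0 < volume (interior Ω) := isOpen_interior.measure_pos volume hΩint
    exact (lt_of_lt_of_le h1 (measure_mono interior_subset)).ne'
  -- norm bounds
  obtain ⟨R, hR⟩ := hΩc.isBounded.exists_norm_le
  set D := R + ‖xstar‖ with hD_def
  have hD : ∀ x ∈ Ω, ‖x - xstar‖ ≤ D := fun x hx =>
    (norm_sub_le x xstar).trans (add_le_add_left (hR x hx) _)
  have hD0 : (0 : ℝ) ≤ D := (norm_nonneg _).trans (hD xstar hxΩ)
  -- integrability
  have hint1 : ∀ κ : ℝ, 0 ≤ κ → IntegrableOn (fun x => τ (f x) ^ κ) Ω := by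
    intro κ hκ
    refine Integrable.mono' (integrableOn_const (C := b ^ κ) hμΩ_lt.ne) (hκmeas κ hκ) ?_
    rw [ae_restrict_iff' hΩm]
    filter_upwards with x hx
    rw [Real.norm_of_nonneg (Real.rpow_nonneg (hτpos _).le κ)]
    exact Real.rpow_le_rpow (hτpos _).le (hgb x hx) hκ
  have hnonneg_ae : ∀ κ : ℝ,
      0 ≤ᵐ[volume.restrict Ω] fun x => τ (f x) ^ κ :=
    fun κ => Filter.Eventually.of_forall fun x => Real.rpow_nonneg (hτpos _).le κ
  have hintx : ∀ κ : ℝ, 0 ≤ κ → IntegrableOn (fun x => τ (f x) ^ κ • x) Ω := by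
    intro κ hκ
    refine Integrable.mono' (integrableOn_const (C := b ^ κ * R) hμΩ_lt.ne) ?_ ?_
    · exact (hκmeas κ hκ).smul aestronglyMeasurable_id
    · rw [ae_restrict_iff' hΩm]
      filter_upwards with x hx
      rw [norm_smul, Real.norm_of_nonneg (Real.rpow_nonneg (hτpos _).le κ)]
      exact mul_le_mul (Real.rpow_le_rpow (hτpos _).le (hgb x hx) hκ) (hR x hx)
        (norm_nonneg _) (Real.rpow_nonneg hbpos.le κ)
  have hintφ : ∀ κ : ℝ, 0 ≤ κ →
      IntegrableOn (fun x => τ (f x) ^ κ * ‖x - xstar‖) Ω := by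
    intro κ hκ
    refine Integrable.mono' (integrableOn_const (C := b ^ κ * D) hμΩ_lt.ne) ?_ ?_
    · exact (hκmeas κ hκ).mul
        ((continuous_id.sub continuous_const).norm).aestronglyMeasurable
    · rw [ae_restrict_iff' hΩm]
      filter_upwards with x hx
      rw [Real.norm_of_nonneg (mul_nonneg (Real.rpow_nonneg (hτpos _).le κ) (norm_nonneg _))]
      exact mul_le_mul (Real.rpow_le_rpow (hτpos _).le (hgb x hx) hκ) (hD x hx)
        (norm_nonneg _) (Real.rpow_nonneg hbpos.le κ)
  -- positivity of the partition function
  have hZpos : ∀ κ : ℝ, 0 ≤ κ → 0 < ∫ t in Ω, τ (f t) ^ κ := by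
    intro κ hκ
    have h1 : ∫ _t in Ω, (a ^ κ) ≤ ∫ t in Ω, τ (f t) ^ κ := by
      refine setIntegral_mono_on (integrableOn_const hμΩ_lt.ne) (hint1 κ hκ) hΩm ?_
      intro x hx
      exact Real.rpow_le_rpow ha.le (hga x hx) hκ
    rw [setIntegral_const, smul_eq_mul] at h1
    have h2 : 0 < (volume Ω).toReal * a ^ κ :=
      mul_pos hμΩ_pos (Real.rpow_pos_of_pos ha κ)
    rw [measureReal_def] at h1
    linarith
  -- barycenter formula
  have hbary : ∀ κ : ℝ, (∫ x in Ω, m κ x • x) =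
      (∫ t in Ω, τ (f t) ^ κ)⁻¹ • ∫ x in Ω, τ (f x) ^ κ • x := by
    intro κ
    simp only [hm, div_eq_inv_mul, mul_smul]
    exact integral_smul _ _
  -- the key estimate
  have hEst : ∀ (κ ρ M' : ℝ), 0 ≤ κ → 0 < ρ → 0 ≤ M' →
      (∀ x ∈ Ω \ Metric.ball xstar ρ, τ (f x) ≤ M') →
      ‖(∫ x in Ω, m κ x • x) - xstar‖ ≤
        ρ + M' ^ κ * (D * (volume Ω).toReal) / ∫ t in Ω, τ (f t) ^ κ := by
    intro κ ρ M' hκ hρ hM'0 hM'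
    set Z := ∫ t in Ω, τ (f t) ^ κ with hZ_def
    have hZ : 0 < Z := hZpos κ hκ
    have key : (∫ x in Ω, m κ x • x) - xstar
        = Z⁻¹ • ∫ x in Ω, τ (f x) ^ κ • (x - xstar) := by
      have e1 : (∫ x in Ω, τ (f x) ^ κ • (x - xstar))
          = (∫ x in Ω, τ (f x) ^ κ • x) - Z • xstar := by
        simp only [smul_sub]
        rw [integral_sub (hintx κ hκ) ((hint1 κ hκ).smul_const xstar), integral_smul_const]
      rw [hbary κ, e1, smul_sub, smul_smul, inv_mul_cancel₀ hZ.ne', one_smul]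
    rw [key, norm_smul, Real.norm_of_nonneg (inv_nonneg.2 hZ.le)]
    have hn : ‖∫ x in Ω, τ (f x) ^ κ • (x - xstar)‖
        ≤ ∫ x in Ω, τ (f x) ^ κ * ‖x - xstar‖ := by
      refine (norm_integral_le_integral_norm _).trans_eq ?_
      congr 1
      funext x
      rw [norm_smul, Real.norm_of_nonneg (Real.rpow_nonneg (hτpos (f x)).le κ)]
    have hsplit : (∫ x in Ω ∩ Metric.ball xstar ρ, τ (f x) ^ κ * ‖x - xstar‖)
        + ∫ x in Ω \ Metric.ball xstar ρ, τ (f x) ^ κ * ‖x - xstar‖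
        = ∫ x in Ω, τ (f x) ^ κ * ‖x - xstar‖ :=
      integral_inter_add_diff measurableSet_ball (hintφ κ hκ)
    have hB : ∫ x in Ω ∩ Metric.ball xstar ρ, τ (f x) ^ κ * ‖x - xstar‖ ≤ ρ * Z := by
      have h1 : ∫ x in Ω ∩ Metric.ball xstar ρ, τ (f x) ^ κ * ‖x - xstar‖
          ≤ ∫ x in Ω ∩ Metric.ball xstar ρ, ρ * τ (f x) ^ κ := by
        refine setIntegral_mono_on ((hintφ κ hκ).mono_set Set.inter_subset_left)
          (((hint1 κ hκ).mono_set Set.inter_subset_left).const_mul ρ)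
          (hΩm.inter measurableSet_ball) ?_
        intro x hx
        rw [mul_comm ρ]
        refine mul_le_mul_of_nonneg_left ?_ (Real.rpow_nonneg (hτpos _).le κ)
        have := hx.2
        rw [Metric.mem_ball, dist_eq_norm] at this
        exact this.le
      have h2 : ∫ x in Ω ∩ Metric.ball xstar ρ, ρ * τ (f x) ^ κ
          = ρ * ∫ x in Ω ∩ Metric.ball xstar ρ, τ (f x) ^ κ := integral_const_mul ρ _
      have h3 : ∫ x in Ω ∩ Metric.ball xstar ρ, τ (f x) ^ κ ≤ Z := by
        refine setIntegral_mono_set (hint1 κ hκ) (hnonneg_ae κ) ?_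
        exact HasSubset.Subset.eventuallyLE Set.inter_subset_left
      calc ∫ x in Ω ∩ Metric.ball xstar ρ, τ (f x) ^ κ * ‖x - xstar‖
          ≤ ρ * ∫ x in Ω ∩ Metric.ball xstar ρ, τ (f x) ^ κ := h1.trans_eq h2
        _ ≤ ρ * Z := mul_le_mul_of_nonneg_left h3 hρ.le
    have hA : ∫ x in Ω \ Metric.ball xstar ρ, τ (f x) ^ κ * ‖x - xstar‖
        ≤ M' ^ κ * (D * (volume Ω).toReal) := by
      have h1 : ∫ x in Ω \ Metric.ball xstar ρ, τ (f x) ^ κ * ‖x - xstar‖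
          ≤ ∫ _x in Ω \ Metric.ball xstar ρ, M' ^ κ * D := by
        refine setIntegral_mono_on ((hintφ κ hκ).mono_set Set.diff_subset)
          (integrableOn_const (lt_of_le_of_lt
            (measure_mono Set.diff_subset) hμΩ_lt).ne)
          (hΩm.diff measurableSet_ball) ?_
        intro x hx
        exact mul_le_mul (Real.rpow_le_rpow (hτpos _).le (hM' x hx) hκ)
          (hD x hx.1) (norm_nonneg _) (Real.rpow_nonneg hM'0 κ)
      rw [setIntegral_const, smul_eq_mul] at h1
      refine h1.trans ?_
      have h2 : (volume (Ω \ Metric.ball xstar ρ)).toReal ≤ (volume Ω).toReal :=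
        ENNReal.toReal_mono hμΩ_lt.ne (measure_mono Set.diff_subset)
      calc (volume (Ω \ Metric.ball xstar ρ)).toReal * (M' ^ κ * D)
          ≤ (volume Ω).toReal * (M' ^ κ * D) := by
            refine mul_le_mul_of_nonneg_right h2 ?_
            exact mul_nonneg (Real.rpow_nonneg hM'0 κ) hD0
        _ = M' ^ κ * (D * (volume Ω).toReal) := by ring
    have hfinal : Z⁻¹ * ‖∫ x in Ω, τ (f x) ^ κ • (x - xstar)‖
        ≤ Z⁻¹ * (ρ * Z + M' ^ κ * (D * (volume Ω).toReal)) := by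
      refine mul_le_mul_of_nonneg_left ?_ (inv_nonneg.2 hZ.le)
      calc ‖∫ x in Ω, τ (f x) ^ κ • (x - xstar)‖
          ≤ ∫ x in Ω, τ (f x) ^ κ * ‖x - xstar‖ := hn
        _ = (∫ x in Ω ∩ Metric.ball xstar ρ, τ (f x) ^ κ * ‖x - xstar‖)
            + ∫ x in Ω \ Metric.ball xstar ρ, τ (f x) ^ κ * ‖x - xstar‖ := hsplit.symm
        _ ≤ ρ * Z + M' ^ κ * (D * (volume Ω).toReal) := add_le_add hB hA
    refine hfinal.trans_eq ?_
    field_simp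
  -- pass to the limit
  rw [Metric.tendsto_atTop]
  intro ε hε
  set ρ := ε / 2 with hρ_def
  have hρpos : 0 < ρ := by positivity
  by_cases hAe : (Ω \ Metric.ball xstar ρ).Nonempty
  · -- nontrivial tail of the domain
    have hAc : IsCompact (Ω \ Metric.ball xstar ρ) := hΩc.diff Metric.isOpen_ball
    obtain ⟨a₀, ha₀, ha₀min⟩ := hAc.exists_isMinOn hAe (hf.mono Set.diff_subset)
    have ha₀Ω : a₀ ∈ Ω := ha₀.1
    have hfa₀ : fstar < f a₀ := by
      rcases lt_or_eq_of_le (hfge a₀ ha₀Ω) with h | h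
      · exact h
      · exfalso
        have hmem : a₀ ∈ ({xstar} : Set (EuclideanSpace ℝ (Fin d))) := by
          rw [← hX]; exact ⟨ha₀Ω, h.symm⟩
        rw [Set.mem_singleton_iff] at hmem
        exact ha₀.2 (by rw [hmem]; exact Metric.mem_ball_self hρpos)
    set fmid := (fstar + f a₀) / 2 with hfmid_def
    have hmid1 : fstar < fmid := by rw [hfmid_def]; linarith
    have hmid2 : fmid < f a₀ := by rw [hfmid_def]; linarith
    set M' := τ (f a₀) with hM'_def
    set M'' := τ fmid with hM''_def
    have hM'pos : 0 < M' := hτpos _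
    have hM''pos : 0 < M'' := hτpos _
    have hM'M'' : M' < M'' := hτ hmid2
    -- a small open set near xstar where τ ∘ f is large
    have hcw : ContinuousWithinAt f Ω xstar := hf xstar hxΩ
    have hpre : f ⁻¹' Set.Iio fmid ∈ 𝓝[Ω] xstar := by
      apply hcw
      exact Iio_mem_nhds (by rw [hfx]; exact hmid1)
    rw [mem_nhdsWithin] at hpre
    obtain ⟨U, hUo, hxU, hUsub⟩ := hpre
    have hVne : (U ∩ interior Ω).Nonempty := by
      have hxcl : xstar ∈ closure (interior Ω) := by rw [← hΩcl]; exact hxΩ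
      exact _root_.mem_closure_iff.mp hxcl U hUo hxU
    set V := U ∩ interior Ω with hV_def
    have hVopen : IsOpen V := hUo.inter isOpen_interior
    have hVΩ : V ⊆ Ω := fun x hx => interior_subset hx.2
    have hVvol_pos : 0 < (volume V).toReal :=
      ENNReal.toReal_pos (hVopen.measure_pos volume hVne).ne'
        (lt_of_le_of_lt (measure_mono hVΩ) hμΩ_lt).ne
    have hVg : ∀ x ∈ V, M'' ≤ τ (f x) := by
      intro x hx
      have hxlt : f x < fmid := hUsub ⟨hx.1, hVΩ hx⟩
      exact (hτ hxlt).le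
    have hZlow : ∀ κ : ℝ, 0 ≤ κ →
        M'' ^ κ * (volume V).toReal ≤ ∫ t in Ω, τ (f t) ^ κ := by
      intro κ hκ
      have h1 : ∫ _t in V, (M'' ^ κ) ≤ ∫ t in V, τ (f t) ^ κ := by
        refine setIntegral_mono_on
          (integrableOn_const (lt_of_le_of_lt (measure_mono hVΩ) hμΩ_lt).ne)
          ((hint1 κ hκ).mono_set hVΩ) hVopen.measurableSet ?_
        intro x hx
        exact Real.rpow_le_rpow hM''pos.le (hVg x hx) hκ
      have h2 : ∫ t in V, τ (f t) ^ κ ≤ ∫ t in Ω, τ (f t) ^ κ :=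
        setIntegral_mono_set (hint1 κ hκ) (hnonneg_ae κ)
          (HasSubset.Subset.eventuallyLE hVΩ)
      rw [setIntegral_const, smul_eq_mul] at h1
      calc M'' ^ κ * (volume V).toReal = (volume V).toReal * M'' ^ κ := mul_comm _ _
        _ ≤ ∫ t in Ω, τ (f t) ^ κ := h1.trans h2
    set r := M' / M'' with hr_def
    have hr0 : 0 < r := div_pos hM'pos hM''pos
    have hr1 : r < 1 := (div_lt_one hM''pos).2 hM'M''
    set C := D * (volume Ω).toReal / (volume V).toReal with hC_def
    have hC0 : 0 ≤ C := by positivity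
    have htail : Tendsto (fun κ : ℝ => C * r ^ κ) atTop (𝓝 0) := by
      have h := tendsto_rpow_atTop_of_base_lt_one r (by linarith) hr1
      simpa using h.const_mul C
    have hev : ∀ᶠ κ : ℝ in atTop, C * r ^ κ < ρ := htail.eventually_lt_const hρpos
    have hev2 : ∀ᶠ κ : ℝ in atTop, dist (∫ x in Ω, m κ x • x) xstar < ε := by
      filter_upwards [hev, eventually_ge_atTop (0 : ℝ)] with κ h1 hκ
      have hest := hEst κ ρ M' hκ hρpos hM'pos.le
        (fun x hx => hτ.antitone (ha₀min hx))
      have h3 : M' ^ κ * (D * (volume Ω).toReal) / (∫ t in Ω, τ (f t) ^ κ)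
          ≤ C * r ^ κ := by
        have hZκ := hZlow κ hκ
        have hZp := hZpos κ hκ
        have hWpos : 0 < M'' ^ κ * (volume V).toReal :=
          mul_pos (Real.rpow_pos_of_pos hM''pos κ) hVvol_pos
        have step1 : M' ^ κ * (D * (volume Ω).toReal) / (∫ t in Ω, τ (f t) ^ κ)
            ≤ M' ^ κ * (D * (volume Ω).toReal) / (M'' ^ κ * (volume V).toReal) := by
          apply div_le_div_of_nonneg_left _ hWpos hZκ
          exact mul_nonneg (Real.rpow_nonneg hM'pos.le κ)
            (mul_nonneg hD0 ENNReal.toReal_nonneg)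
        refine step1.trans_eq ?_
        rw [hC_def, hr_def, Real.div_rpow hM'pos.le hM''pos.le]
        field_simp
      rw [dist_eq_norm]
      calc ‖(∫ x in Ω, m κ x • x) - xstar‖
          ≤ ρ + M' ^ κ * (D * (volume Ω).toReal) / ∫ t in Ω, τ (f t) ^ κ := hest
        _ ≤ ρ + C * r ^ κ := by linarith
        _ < ρ + ρ := by linarith
        _ = ε := by rw [hρ_def]; ring
    rw [eventually_atTop] at hev2
    exact hev2
  · -- Ω is inside the ball
    refine ⟨1, fun κ hκ => ?_⟩
    have h0 : ∀ x ∈ Ω \ Metric.ball xstar ρ, τ (f x) ≤ 0 := by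
      rw [Set.not_nonempty_iff_eq_empty] at hAe
      intro x hx
      rw [hAe] at hx
      exact absurd hx (Set.notMem_empty x)
    have hest := hEst κ ρ 0 (by linarith) hρpos le_rfl h0
    rw [Real.zero_rpow (by linarith : κ ≠ 0)] at hest
    rw [dist_eq_norm]
    calc ‖(∫ x in Ω, m κ x • x) - xstar‖
        ≤ ρ + 0 * (D * (volume Ω).toReal) / ∫ t in Ω, τ (f t) ^ κ := hest
      _ = ρ := by rw [zero_mul, zero_div, add_zero]
      _ < ε := by rw [hρ_def]; linarith
end

section
/- The mass of the nascent minima density concentrates on sublevel sets of f near the global minimum: for every δ > 0, lim_{κ → ∞} ∫_{{x ∈ Ω : f(x) ≥ f* + δ}} m^(κ)(x) dx = 0. -/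
open MeasureTheory Filter Topology

/-- The mass of the nascent minima density concentrates near the global
minimum: for every `δ > 0`, the mass of `{x ∈ Ω | f x ≥ f* + δ}` tends to `0` as
`κ → ∞`. -/
theorem nascent_minima_mass_concentration
    (d : ℕ) (hd : 1 ≤ d)
    (Ω : Set (EuclideanSpace ℝ (Fin d)))
    (hΩc : IsCompact Ω)
    (hΩcl : Ω = closure (interior Ω))
    (hΩint : (interior Ω).Nonempty)
    (f : EuclideanSpace ℝ (Fin d) → ℝ)
    (hf : ContinuousOn f Ω)
    (fstar : ℝ) (hmin : IsLeast (f '' Ω) fstar)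
    (τ : ℝ → ℝ) (hτ : StrictAnti τ) (hτpos : ∀ y, 0 < τ y)
    (m : ℝ → EuclideanSpace ℝ (Fin d) → ℝ)
    (hm : ∀ κ x, m κ x = τ (f x) ^ κ / ∫ t in Ω, τ (f t) ^ κ) :
    ∀ δ > (0 : ℝ),
      Tendsto (fun κ : ℝ => ∫ x in {x | x ∈ Ω ∧ fstar + δ ≤ f x}, m κ x) atTop (𝓝 0) := by
  intro δ hδ
  have hΩm : MeasurableSet Ω := hΩc.isClosed.measurableSet
  obtain ⟨x0, hx0Ω, hx0⟩ := hmin.1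
  have hlb : ∀ x ∈ Ω, fstar ≤ f x := fun x hx => hmin.2 ⟨x, hx, rfl⟩
  set a := τ (fstar + δ) with ha
  set b := τ (fstar + δ / 2) with hb
  have hab : a < b := hτ (by linarith)
  have ha0 : 0 < a := hτpos _
  have hb0 : 0 < b := hτpos _
  have hc0 : 0 < τ fstar := hτpos _
  -- an open set inside Ω where f < fstar + δ/2
  have hx0lt : f x0 < fstar + δ / 2 := by rw [hx0]; linarith
  have hev : ∀ᶠ x in 𝓝[Ω] x0, f x < fstar + δ / 2 :=
    (hf x0 hx0Ω) (Iio_mem_nhds hx0lt)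
  rw [eventually_nhdsWithin_iff, eventually_nhds_iff] at hev
  obtain ⟨O, hOsub, hOopen, hx0O⟩ := hev
  have hx0cl : x0 ∈ closure (interior Ω) := hΩcl ▸ hx0Ω
  have hWne : (O ∩ interior Ω).Nonempty := (mem_closure_iff.mp hx0cl) O hOopen hx0O
  set W := O ∩ interior Ω with hW
  have hWopen : IsOpen W := hOopen.inter isOpen_interior
  have hWΩ : W ⊆ Ω := fun x hx => interior_subset hx.2
  have hWμ : 0 < volume W := hWopen.measure_pos _ hWne
  have hWμfin : volume W < ⊤ := lt_of_le_of_lt (measure_mono hWΩ) hΩc.measure_lt_top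
  have hWf : ∀ x ∈ W, f x < fstar + δ / 2 := fun x hx => hOsub x hx.1 (hWΩ hx)
  -- the sublevel complement set
  set S := {x | x ∈ Ω ∧ fstar + δ ≤ f x} with hSdef
  have hSeq : S = Ω ∩ f ⁻¹' Set.Ici (fstar + δ) := by
    ext x; simp [hSdef, Set.mem_preimage]
  have hSclosed : IsClosed S := by
    rw [hSeq]
    exact hf.preimage_isClosed_of_isClosed hΩc.isClosed isClosed_Ici
  have hSm : MeasurableSet S := hSclosed.measurableSet
  have hSΩ : S ⊆ Ω := fun x hx => hx.1
  -- basic facts about the integrand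
  have hgpos : ∀ (κ : ℝ) (x : _), 0 < τ (f x) ^ κ :=
    fun κ x => Real.rpow_pos_of_pos (hτpos _) κ
  have hmeas : ∀ κ : ℝ, 0 ≤ κ →
      AEStronglyMeasurable (fun t => τ (f t) ^ κ) (volume.restrict Ω) := by
    intro κ hκ
    have hfae : AEMeasurable f (volume.restrict Ω) := hf.aemeasurable hΩm
    have hτm : Measurable τ := hτ.antitone.measurable
    have hpow : Continuous (fun x : ℝ => x ^ κ) := Real.continuous_rpow_const hκ
    exact ((hpow.measurable.comp hτm).comp_aemeasurable hfae).aestronglyMeasurable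
  have hintΩ : ∀ κ : ℝ, 0 ≤ κ → IntegrableOn (fun t => τ (f t) ^ κ) Ω := by
    intro κ hκ
    refine ⟨hmeas κ hκ, HasFiniteIntegral.restrict_of_bounded (C := τ fstar ^ κ)
      hΩc.measure_lt_top ?_⟩
    filter_upwards [ae_restrict_mem hΩm] with x hx
    rw [Real.norm_eq_abs, abs_of_pos (hgpos κ x)]
    exact Real.rpow_le_rpow (hτpos _).le (hτ.antitone (hlb x hx)) hκ
  -- lower bound for the denominator
  have hden : ∀ κ : ℝ, 0 ≤ κ →
      b ^ κ * (volume W).toReal ≤ ∫ t in Ω, τ (f t) ^ κ := by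
    intro κ hκ
    have h1 : ∫ t in W, (b : ℝ) ^ κ ≤ ∫ t in W, τ (f t) ^ κ := by
      refine setIntegral_mono_on (integrableOn_const hWμfin.ne)
        ((hintΩ κ hκ).mono_set hWΩ) hWopen.measurableSet ?_
      intro x hx
      exact Real.rpow_le_rpow hb0.le (hτ.antitone (hWf x hx).le) hκ
    have h2 : ∫ t in W, τ (f t) ^ κ ≤ ∫ t in Ω, τ (f t) ^ κ := by
      refine setIntegral_mono_set (hintΩ κ hκ) ?_ (HasSubset.Subset.eventuallyLE hWΩ)
      exact Filter.Eventually.of_forall fun x => (hgpos κ x).le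
    calc b ^ κ * (volume W).toReal = (volume W).toReal * b ^ κ := by ring
      _ = ∫ t in W, (b : ℝ) ^ κ := by rw [setIntegral_const]; rfl
      _ ≤ ∫ t in Ω, τ (f t) ^ κ := le_trans h1 h2
  have hdenpos : ∀ κ : ℝ, 0 ≤ κ → 0 < ∫ t in Ω, τ (f t) ^ κ := by
    intro κ hκ
    refine lt_of_lt_of_le ?_ (hden κ hκ)
    exact mul_pos (Real.rpow_pos_of_pos hb0 κ) (ENNReal.toReal_pos hWμ.ne' hWμfin.ne)
  -- upper bound for the numerator
  have hnum : ∀ κ : ℝ, 0 ≤ κ →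
      ∫ x in S, τ (f x) ^ κ ≤ a ^ κ * (volume Ω).toReal := by
    intro κ hκ
    have h1 : ∫ x in S, τ (f x) ^ κ ≤ ∫ x in S, (a : ℝ) ^ κ := by
      refine setIntegral_mono_on ((hintΩ κ hκ).mono_set hSΩ)
        (integrableOn_const (lt_of_le_of_lt (measure_mono hSΩ) hΩc.measure_lt_top).ne)
        hSm ?_
      intro x hx
      exact Real.rpow_le_rpow (hτpos _).le (hτ.antitone hx.2) hκ
    have h2 : (volume S).toReal ≤ (volume Ω).toReal :=
      ENNReal.toReal_mono hΩc.measure_lt_top.ne (measure_mono hSΩ)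
    calc ∫ x in S, τ (f x) ^ κ ≤ ∫ x in S, (a : ℝ) ^ κ := h1
      _ = (volume S).toReal * a ^ κ := by rw [setIntegral_const]; rfl
      _ ≤ (volume Ω).toReal * a ^ κ :=
          mul_le_mul_of_nonneg_right h2 (Real.rpow_pos_of_pos ha0 κ).le
      _ = a ^ κ * (volume Ω).toReal := by ring
  -- rewrite the integral of m
  have hmint : ∀ κ : ℝ, (∫ x in S, m κ x)
      = (∫ x in S, τ (f x) ^ κ) / (∫ t in Ω, τ (f t) ^ κ) := by
    intro κ
    simp only [hm]
    rw [integral_div]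
  -- squeeze
  set C := (volume Ω).toReal / (volume W).toReal with hC
  have hWtr : 0 < (volume W).toReal := ENNReal.toReal_pos hWμ.ne' hWμfin.ne
  have hub : ∀ᶠ κ : ℝ in atTop, (∫ x in S, m κ x) ≤ (a / b) ^ κ * C := by
    filter_upwards [eventually_ge_atTop (0 : ℝ)] with κ hκ
    rw [hmint κ]
    have hD := hdenpos κ hκ
    rw [div_le_iff₀ hD]
    calc ∫ x in S, τ (f x) ^ κ ≤ a ^ κ * (volume Ω).toReal := hnum κ hκ
      _ = (a / b) ^ κ * C * (b ^ κ * (volume W).toReal) := by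
          rw [Real.div_rpow ha0.le hb0.le, hC]
          have hbκ : (b : ℝ) ^ κ ≠ 0 := (Real.rpow_pos_of_pos hb0 κ).ne'
          field_simp
      _ ≤ (a / b) ^ κ * C * (∫ t in Ω, τ (f t) ^ κ) := by
          refine mul_le_mul_of_nonneg_left (hden κ hκ) ?_
          positivity
  have hlbnd : ∀ᶠ κ : ℝ in atTop, 0 ≤ ∫ x in S, m κ x := by
    filter_upwards [eventually_ge_atTop (0 : ℝ)] with κ hκ
    rw [hmint κ]
    exact div_nonneg (setIntegral_nonneg hSm fun x _ => (hgpos κ x).le) (hdenpos κ hκ).le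
  have htend : Tendsto (fun κ : ℝ => (a / b) ^ κ * C) atTop (𝓝 0) := by
    have h1 : Tendsto (fun κ : ℝ => (a / b) ^ κ) atTop (𝓝 0) := by
      refine tendsto_rpow_atTop_of_base_lt_one _ ?_ ?_
      · have : (0 : ℝ) < a / b := div_pos ha0 hb0
        linarith
      · rw [div_lt_one hb0]; exact hab
    simpa using h1.mul_const C
  exact squeeze_zero' hlbnd hub htend
end

section
/- Stein's identity on a box: the expectation of the Stein operator applied to a function in the Stein class of μ vanishes. Precisely, ∫_Ω (⟨∇ log p(x), φ(x)⟩ + div φ(x)) p(x) dx = 0, where div φ(x) is the trace of the Fréchet derivative of φ at x (the sum of the diagonal entries of its Jacobian). -/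
open MeasureTheory

lemma trace_eq_sum_single {d : ℕ} (L : EuclideanSpace ℝ (Fin d) →L[ℝ] EuclideanSpace ℝ (Fin d)) :
    LinearMap.trace ℝ (EuclideanSpace ℝ (Fin d)) L.toLinearMap
      = ∑ i, L (EuclideanSpace.single i (1:ℝ)) i := by
  classical
  rw [LinearMap.trace_eq_matrix_trace ℝ (EuclideanSpace.basisFun (Fin d) ℝ).toBasis]
  rw [Matrix.trace]
  refine Finset.sum_congr rfl fun i _ => ?_
  rw [Matrix.diag_apply, LinearMap.toMatrix_apply]
  simp [OrthonormalBasis.coe_toBasis_repr_apply, EuclideanSpace.basisFun_repr,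
    OrthonormalBasis.coe_toBasis, EuclideanSpace.basisFun_apply]

lemma inner_gradient_eq_fderiv {d : ℕ} (f : EuclideanSpace ℝ (Fin d) → ℝ)
    (x v : EuclideanSpace ℝ (Fin d)) :
    (inner ℝ (gradient f x) v : ℝ) = fderiv ℝ f x v := by
  rw [gradient, ← InnerProductSpace.toDual_apply_apply, LinearIsometryEquiv.apply_symm_apply]

/-- Stein's identity on a box: for `Ω = [a,b] ⊂ ℝ^d` with nonempty
interior, `p` a positive `C¹` density on a neighborhood of `Ω`, and `φ` a `C¹` vector
field with `p • φ` vanishing on the boundary of `Ω` (Stein class condition),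
`∫_Ω (⟨∇ log p, φ⟩ + div φ) p = 0`, where `div φ x` is the trace of the Fréchet
derivative of `φ` at `x`. -/
theorem stein_identity_box
    (d : ℕ) (a b : Fin d → ℝ) (hab : ∀ i, a i < b i)
    (Ω : Set (EuclideanSpace ℝ (Fin d)))
    (hΩ : Ω = {x : EuclideanSpace ℝ (Fin d) | ∀ i, a i ≤ x i ∧ x i ≤ b i})
    (V : Set (EuclideanSpace ℝ (Fin d))) (hV : IsOpen V) (hΩV : Ω ⊆ V)
    (p : EuclideanSpace ℝ (Fin d) → ℝ)
    (hp : ContDiffOn ℝ 1 p V)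
    (hppos : ∀ x ∈ Ω, 0 < p x)
    (φ : EuclideanSpace ℝ (Fin d) → EuclideanSpace ℝ (Fin d))
    (hφ : ContDiffOn ℝ 1 φ V)
    (hbd : ∀ x ∈ frontier Ω, p x • φ x = 0) :
    ∫ x in Ω,
      ((inner ℝ (gradient (fun y => Real.log (p y)) x) (φ x) : ℝ) +
        LinearMap.trace ℝ (EuclideanSpace ℝ (Fin d)) (fderiv ℝ φ x).toLinearMap) * p x
      = 0 := by
  classical
  cases d with
  | zero =>
      have h0 : ∀ x : EuclideanSpace ℝ (Fin 0),
          ((inner ℝ (gradient (fun y => Real.log (p y)) x) (φ x) : ℝ) +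
            LinearMap.trace ℝ (EuclideanSpace ℝ (Fin 0))
              (fderiv ℝ φ x).toLinearMap) * p x = 0 := by
        intro x
        have h1 : (inner ℝ (gradient (fun y => Real.log (p y)) x) (φ x) : ℝ) = 0 := by
          have : φ x = 0 := Subsingleton.elim _ _
          simp [this]
        have h2 : LinearMap.trace ℝ (EuclideanSpace ℝ (Fin 0))
            (fderiv ℝ φ x).toLinearMap = 0 := by
          rw [trace_eq_sum_single]
          simp
        rw [h1, h2]; ring
      simp only [h0, integral_zero]
  | succ n =>
      letI : PartialOrder (EuclideanSpace ℝ (Fin (n+1))) :=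
        PartialOrder.lift (fun x => WithLp.ofLp x) (WithLp.ofLp_injective 2)
      set eL : EuclideanSpace ℝ (Fin (n+1)) ≃L[ℝ] (Fin (n+1) → ℝ) :=
        EuclideanSpace.equiv (Fin (n+1)) ℝ with heL
      set aE : EuclideanSpace ℝ (Fin (n+1)) := eL.symm a with haE
      set bE : EuclideanSpace ℝ (Fin (n+1)) := eL.symm b with hbE
      have heLa : eL aE = a := eL.apply_symm_apply a
      have heLb : eL bE = b := eL.apply_symm_apply b
      -- Ω = Icc aE bE
      have hIcc : Set.Icc aE bE = Ω := by
        ext x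
        simp only [hΩ, Set.mem_Icc, Set.mem_setOf_eq]
        constructor
        · rintro ⟨h1, h2⟩ i; exact ⟨h1 i, h2 i⟩
        · intro h; exact ⟨fun i => (h i).1, fun i => (h i).2⟩
      -- Ω is closed, compact
      have hΩpre : Ω = eL ⁻¹' (Set.pi Set.univ fun i => Set.Icc (a i) (b i)) := by
        ext x
        simp only [hΩ, Set.mem_preimage, Set.mem_pi, Set.mem_univ, forall_true_left,
          Set.mem_Icc, Set.mem_setOf_eq]
        exact Iff.rfl
      have hclosed : IsClosed Ω := by
        rw [hΩpre]
        exact (isClosed_set_pi fun i _ => isClosed_Icc).preimage eL.continuous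
      have hcompact : IsCompact Ω := by
        have h1 : IsCompact (Set.pi Set.univ fun i => Set.Icc (a i) (b i)) :=
          isCompact_univ_pi fun i => isCompact_Icc
        have h2 : Ω = eL.symm '' (Set.pi Set.univ fun i => Set.Icc (a i) (b i)) := by
          rw [hΩpre]
          ext x
          simp [Set.mem_image, eL.symm_apply_eq, eq_comm]
        rw [h2]
        exact h1.image eL.symm.continuous
      -- interior of Ω
      have hint : interior Ω = eL ⁻¹' (Set.pi Set.univ fun i => Set.Ioo (a i) (b i)) := by
        rw [hΩpre, show ⇑eL = ⇑eL.toHomeomorph from rfl, ← Homeomorph.preimage_interior]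
        rw [interior_pi_set Set.finite_univ]
        simp [interior_Icc]
      have hfront : ∀ y : EuclideanSpace ℝ (Fin (n+1)), (∀ i, a i ≤ y i ∧ y i ≤ b i) → (∃ i, y i = a i ∨ y i = b i) →
          y ∈ frontier Ω := by
        intro y hy ⟨i, hi⟩
        rw [frontier, hclosed.closure_eq, hint]
        constructor
        · rw [hΩ]; exact hy
        · intro hmem
          have := hmem i (Set.mem_univ i)
          rcases hi with h | h
          · exact absurd this.1 (by rw [show (eL y) i = y i from rfl, h]; exact lt_irrefl _)
          · exact absurd this.2 (by rw [show (eL y) i = y i from rfl, h]; exact lt_irrefl _)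
      -- differentiability
      have hpd : ∀ x ∈ V, HasFDerivAt p (fderiv ℝ p x) x := fun x hx =>
        (((hp.differentiableOn one_ne_zero).differentiableAt (hV.mem_nhds hx))).hasFDerivAt
      have hφd : ∀ x ∈ V, HasFDerivAt φ (fderiv ℝ φ x) x := fun x hx =>
        (((hφ.differentiableOn one_ne_zero).differentiableAt (hV.mem_nhds hx))).hasFDerivAt
      have hpc : ContinuousOn (fderiv ℝ p) V := hp.continuousOn_fderiv_of_isOpen hV le_rfl
      have hφc : ContinuousOn (fderiv ℝ φ) V := hφ.continuousOn_fderiv_of_isOpen hV le_rfl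
      -- components and their derivatives
      set f : Fin (n+1) → EuclideanSpace ℝ (Fin (n+1)) → ℝ := fun i x => p x * φ x i with hf
      set f' : Fin (n+1) → EuclideanSpace ℝ (Fin (n+1)) → (EuclideanSpace ℝ (Fin (n+1)) →L[ℝ] ℝ) := fun i x =>
        p x • ((EuclideanSpace.proj i).comp (fderiv ℝ φ x)) + (φ x i) • fderiv ℝ p x with hf'
      have Hd : ∀ x ∈ interior (Set.Icc aE bE) \ (∅ : Set (EuclideanSpace ℝ (Fin (n+1)))), ∀ i,
          HasFDerivAt (f i) (f' i x) x := by
        rintro x ⟨hx, -⟩ i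
        have hxV : x ∈ V := hΩV (interior_subset (by rwa [hIcc] at hx))
        have h1 := (ContinuousLinearMap.hasFDerivAt
          (EuclideanSpace.proj i : EuclideanSpace ℝ (Fin (n+1)) →L[ℝ] ℝ)).comp x (hφd x hxV)
        exact (hpd x hxV).mul h1
      have Hc : ∀ i, ContinuousOn (f i) (Set.Icc aE bE) := by
        intro i
        rw [hIcc]
        exact ((hp.continuousOn).mul
          ((EuclideanSpace.proj i).continuous.comp_continuousOn hφ.continuousOn)).mono hΩV
      set DF : EuclideanSpace ℝ (Fin (n+1)) → ℝ := fun x => ∑ i, f' i x (eL.symm (Pi.single i 1)) with hDF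
      have hDFcont : ContinuousOn DF Ω := by
        apply continuousOn_finset_sum
        intro i _
        simp only [hf', ContinuousLinearMap.add_apply, ContinuousLinearMap.coe_smul',
          Pi.smul_apply, ContinuousLinearMap.coe_comp', Function.comp_apply, smul_eq_mul]
        apply ContinuousOn.add
        · exact ((hp.continuousOn.mul
            (((EuclideanSpace.proj i).continuous.comp_continuousOn
              (hφc.clm_apply continuousOn_const))))).mono hΩV
        · exact ((((EuclideanSpace.proj i).continuous.comp_continuousOn hφ.continuousOn)).mul
            (hpc.clm_apply continuousOn_const)).mono hΩV
      have Hi : IntegrableOn DF (Set.Icc aE bE) := by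
        rw [hIcc]
        exact hDFcont.integrableOn_compact hcompact
      have hle : aE ≤ bE := fun i => (hab i).le
      have hdiv := MeasureTheory.integral_divergence_of_hasFDerivAt_off_countable_of_equiv
        eL (fun x y => Iff.rfl) (EuclideanSpace.volume_preserving_symm_measurableEquiv_toLp (Fin (n+1)))
        f f' (∅ : Set (EuclideanSpace ℝ (Fin (n+1)))) Set.countable_empty aE bE hle Hc Hd DF (fun x => rfl) Hi
      -- boundary terms vanish
      have hbd0 : ∀ (i : Fin (n+1)) (c : ℝ), c = a i ∨ c = b i →
          ∀ x ∈ Set.Icc (eL aE ∘ i.succAbove) (eL bE ∘ i.succAbove),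
            f i (eL.symm (i.insertNth c x)) = 0 := by
        intro i c hc x hx
        set y : EuclideanSpace ℝ (Fin (n+1)) := eL.symm (i.insertNth c x) with hy
        have hyΩ : ∀ j, a j ≤ y j ∧ y j ≤ b j := by
          intro j
          have hyj : y j = (i.insertNth c x : Fin (n+1) → ℝ) j := rfl
          rcases eq_or_ne j i with h | hne
          · subst h
            rw [hyj, Fin.insertNth_apply_same]
            rcases hc with rfl | rfl
            · exact ⟨le_refl _, (hab j).le⟩
            · exact ⟨(hab j).le, le_refl _⟩
          · obtain ⟨k, rfl⟩ := Fin.exists_succAbove_eq hne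
            rw [hyj, Fin.insertNth_apply_succAbove]
            rw [heLa, heLb] at hx
            exact ⟨hx.1 k, hx.2 k⟩
        have hyfront : y ∈ frontier Ω := by
          apply hfront y hyΩ
          refine ⟨i, ?_⟩
          have hyi : y i = c := by
            show (i.insertNth c x : Fin (n+1) → ℝ) i = c
            exact Fin.insertNth_apply_same (α := fun _ => ℝ) i c x
          rcases hc with rfl | rfl
          · exact Or.inl hyi
          · exact Or.inr hyi
        have := hbd y hyfront
        have : (p y • φ y) i = 0 := by rw [this]; rfl
        simpa [hf, PiLp.smul_apply, smul_eq_mul] using this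
      have hbd1 : ∀ i : Fin (n+1),
          (∫ x in Set.Icc (eL aE ∘ i.succAbove) (eL bE ∘ i.succAbove),
            f i (eL.symm (i.insertNth (eL bE i) x))) = 0 := by
        intro i
        rw [setIntegral_congr_fun measurableSet_Icc
          (fun x hx => hbd0 i (eL bE i) (Or.inr (by rw [heLb])) x hx)]
        simp
      have hbd2 : ∀ i : Fin (n+1),
          (∫ x in Set.Icc (eL aE ∘ i.succAbove) (eL bE ∘ i.succAbove),
            f i (eL.symm (i.insertNth (eL aE i) x))) = 0 := by
        intro i
        rw [setIntegral_congr_fun measurableSet_Icc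
          (fun x hx => hbd0 i (eL aE i) (Or.inl (by rw [heLa])) x hx)]
        simp
      have hDFint : ∫ x in Set.Icc aE bE, DF x = 0 := by
        rw [hdiv]
        simp [hbd1, hbd2]
      -- now identify integrand with DF on Ω
      rw [← hIcc]
      rw [← hDFint]
      refine setIntegral_congr_fun (by rw [hIcc]; exact hclosed.measurableSet) ?_
      intro x hx
      dsimp only
      rw [hIcc] at hx
      have hxV : x ∈ V := hΩV hx
      have hpx : p x ≠ 0 := (hppos x hx).ne'
      -- gradient of log p
      have hlog : HasFDerivAt (fun y => Real.log (p y)) ((p x)⁻¹ • fderiv ℝ p x) x :=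
        (hpd x hxV).log hpx
      have hgrad : (inner ℝ (gradient (fun y => Real.log (p y)) x) (φ x) : ℝ)
          = (p x)⁻¹ * (fderiv ℝ p x (φ x)) := by
        rw [inner_gradient_eq_fderiv, hlog.fderiv]
        simp [smul_eq_mul]
      -- decompose fderiv p x (φ x)
      have hφsum : fderiv ℝ p x (φ x)
          = ∑ i, φ x i * fderiv ℝ p x (EuclideanSpace.single i (1:ℝ)) := by
        conv_lhs => rw [← (EuclideanSpace.basisFun (Fin (n+1)) ℝ).sum_repr (φ x)]
        rw [map_sum]
        refine Finset.sum_congr rfl fun i _ => ?_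
        rw [EuclideanSpace.basisFun_repr, EuclideanSpace.basisFun_apply, _root_.map_smul, smul_eq_mul]
      have htr : LinearMap.trace ℝ (EuclideanSpace ℝ (Fin (n+1))) (fderiv ℝ φ x).toLinearMap
          = ∑ i, (fderiv ℝ φ x (EuclideanSpace.single i (1:ℝ))) i :=
        trace_eq_sum_single _
      have hsingle : ∀ i : Fin (n+1),
          eL.symm (Pi.single i (1:ℝ)) = EuclideanSpace.single i (1:ℝ) := fun i => rfl
      have hDFx : DF x = ∑ i, (p x * (fderiv ℝ φ x (EuclideanSpace.single i (1:ℝ))) i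
          + φ x i * fderiv ℝ p x (EuclideanSpace.single i (1:ℝ))) := by
        simp only [hDF, hf', ContinuousLinearMap.add_apply, ContinuousLinearMap.coe_smul',
          Pi.smul_apply, ContinuousLinearMap.coe_comp', Function.comp_apply, smul_eq_mul,
          hsingle]
        rfl
      rw [hDFx, hgrad, htr]
      rw [Finset.sum_add_distrib, ← Finset.mul_sum, ← hφsum]
      field_simp
      ring
end
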